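/- arXiv:1006.2275 — 15 statements merged into one kernel-verified Lean document; each statement's English description precedes it below -/
import Mathlib

section
/- Let α, n, m, l be natural numbers, and let g, h, f be colligations of sizes (α,n), (α,m), (α,l) respectively. Then (g∘h)∘f, which is a colligation of size (α,(n+m)+l), equals g∘(h∘f) after reindexing along the natural identification of index sets Fin α ⊕ ((Fin n ⊕ Fin m) ⊕ Fin l) ≃ Fin α ⊕ (Fin n ⊕ (Fin m ⊕ Fin l)) given by associativity of the disjoint sum. That is, the product of colligations is associative. -/
open Matrix

/-- The product of operator colligations: given `g` of size `(A, I)` and `h` of size `(A, J)`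
(as block matrices), their product is the block matrix
`[[A·P, B, A·Q], [C·P, D, C·Q], [R, 0, T]]` indexed by `A ⊕ (I ⊕ J)`. -/
noncomputable def colProd {A I J : Type*} [Fintype A]
    (g : Matrix (A ⊕ I) (A ⊕ I) ℂ) (h : Matrix (A ⊕ J) (A ⊕ J) ℂ) :
    Matrix (A ⊕ (I ⊕ J)) (A ⊕ (I ⊕ J)) ℂ :=
  fromBlocks (g.toBlocks₁₁ * h.toBlocks₁₁)
    (fromCols g.toBlocks₁₂ (g.toBlocks₁₁ * h.toBlocks₁₂))
    (fromRows (g.toBlocks₂₁ * h.toBlocks₁₁) h.toBlocks₂₁)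
    (fromBlocks g.toBlocks₂₂ (g.toBlocks₂₁ * h.toBlocks₁₂) 0 h.toBlocks₂₂)

/-- the product of colligations is associative, after reindexing along the
natural associativity identification
`Fin α ⊕ ((Fin n ⊕ Fin m) ⊕ Fin l) ≃ Fin α ⊕ (Fin n ⊕ (Fin m ⊕ Fin l))`. -/
theorem colProd_assoc {α n m l : ℕ}
    (g : Matrix (Fin α ⊕ Fin n) (Fin α ⊕ Fin n) ℂ)
    (h : Matrix (Fin α ⊕ Fin m) (Fin α ⊕ Fin m) ℂ)
    (f : Matrix (Fin α ⊕ Fin l) (Fin α ⊕ Fin l) ℂ) :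
    Matrix.reindex
        (Equiv.sumCongr (Equiv.refl (Fin α)) (Equiv.sumAssoc (Fin n) (Fin m) (Fin l)))
        (Equiv.sumCongr (Equiv.refl (Fin α)) (Equiv.sumAssoc (Fin n) (Fin m) (Fin l)))
        (colProd (colProd g h) f)
      = colProd g (colProd h f) := by
  ext i j
  rcases i with i | (i | (i | i)) <;> rcases j with j | (j | (j | j)) <;>
    simp [colProd, toBlocks₁₁, toBlocks₁₂, toBlocks₂₁, toBlocks₂₂, fromBlocks,
      Matrix.mul_apply, Finset.mul_sum, Finset.sum_mul, mul_assoc]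
  all_goals exact Finset.sum_comm
end

section
/- Let α, n, m be natural numbers, let g = [[A,B],[C,D]] be a colligation of size (α,n) and h = [[P,Q],[R,T]] a colligation of size (α,m), and let z ∈ ℂ be such that both 1 − z·D and 1 − z·T are invertible. Then 1 − z·D'' is invertible, where D'' = [[D, C·Q],[0, T]] is the lower-right (n+m)×(n+m) block of g∘h, and the characteristic functions satisfy χ(g∘h; z) = χ(g; z) · χ(h; z). -/
open Matrix

/-- The characteristic function of a colligation `g = [[A,B],[C,D]]`:
`χ(g; z) = A + z·B·(1 − z·D)⁻¹·C`. -/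
noncomputable def charFun {A I : Type*} [Fintype A] [Fintype I] [DecidableEq A] [DecidableEq I]
    (g : Matrix (A ⊕ I) (A ⊕ I) ℂ) (z : ℂ) : Matrix A A ℂ :=
  g.toBlocks₁₁ + z • (g.toBlocks₁₂ * (1 - z • g.toBlocks₂₂)⁻¹ * g.toBlocks₂₁)

/-- multiplicativity of the characteristic function:
`χ(g∘h; z) = χ(g; z) · χ(h; z)` whenever `1 − z·D` and `1 − z·T` are invertible;
moreover `1 − z·D''` is then invertible, where `D''` is the lower-right block of `g∘h`. -/
theorem charFun_colProd {α n m : ℕ}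
    (g : Matrix (Fin α ⊕ Fin n) (Fin α ⊕ Fin n) ℂ)
    (h : Matrix (Fin α ⊕ Fin m) (Fin α ⊕ Fin m) ℂ) (z : ℂ)
    (hg : IsUnit (1 - z • g.toBlocks₂₂)) (hh : IsUnit (1 - z • h.toBlocks₂₂)) :
    IsUnit (1 - z • (colProd g h).toBlocks₂₂) ∧
      charFun (colProd g h) z = charFun g z * charFun h z := by
  set A := g.toBlocks₁₁ with hAdef
  set B := g.toBlocks₁₂ with hBdef
  set C := g.toBlocks₂₁ with hCdef
  set D := g.toBlocks₂₂ with hDdef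
  set P := h.toBlocks₁₁ with hPdef
  set Q := h.toBlocks₁₂ with hQdef
  set R := h.toBlocks₂₁ with hRdef
  set T := h.toBlocks₂₂ with hTdef
  have hblk : (1 : Matrix (Fin n ⊕ Fin m) (Fin n ⊕ Fin m) ℂ)
      - z • (colProd g h).toBlocks₂₂
      = fromBlocks (1 - z • D) (-(z • (C * Q))) 0 (1 - z • T) := by
    ext (i | i) (j | j) <;>
      simp [colProd, toBlocks₂₂, fromBlocks, Matrix.one_apply, Matrix.sub_apply] <;>
      exact Or.inl rfl
  have hunit : IsUnit ((1 : Matrix (Fin n ⊕ Fin m) (Fin n ⊕ Fin m) ℂ)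
      - z • (colProd g h).toBlocks₂₂) := by
    rw [hblk, isUnit_fromBlocks_zero₂₁]
    exact ⟨hg, hh⟩
  refine ⟨hunit, ?_⟩
  have hinv : ((1 : Matrix (Fin n ⊕ Fin m) (Fin n ⊕ Fin m) ℂ)
      - z • (colProd g h).toBlocks₂₂)⁻¹
      = fromBlocks (1 - z • D)⁻¹
          (-((1 - z • D)⁻¹ * -(z • (C * Q)) * (1 - z • T)⁻¹)) 0 (1 - z • T)⁻¹ := by
    rw [hblk]
    exact inv_fromBlocks_zero₂₁_of_isUnit_iff _ _ _ (iff_of_true hg hh)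
  have h11 : (colProd g h).toBlocks₁₁ = A * P := rfl
  have h12 : (colProd g h).toBlocks₁₂ = fromCols B (A * Q) := by
    ext i (j | j) <;> rfl
  have h21 : (colProd g h).toBlocks₂₁ = fromRows (C * P) R := by
    ext (i | i) j <;> rfl
  unfold charFun
  rw [hinv, h11, h12, h21]
  set X := (1 - z • D)⁻¹
  set W := (1 - z • T)⁻¹
  simp only [fromCols_mul_fromBlocks, fromCols_mul_fromRows,
    Matrix.mul_zero, add_zero, zero_add, Matrix.add_mul, Matrix.mul_add,
    Matrix.neg_mul, Matrix.mul_neg, neg_neg,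
    Matrix.smul_mul, Matrix.mul_smul, smul_smul, smul_add, mul_assoc]
  simp only [Matrix.mul_assoc]
  abel
end

section
/- Let α, n be natural numbers and let g = [[A,B],[C,D]] be a colligation of size (α,n) which is a unitary matrix (g belongs to the unitary group of (α+n)×(α+n) complex matrices). Let z ∈ ℂ with |z| < 1. Then 1 − z·D is invertible, and the characteristic function is a contraction: for every vector v ∈ ℂ^α, ‖χ(g; z)·v‖ ≤ ‖v‖ in the Euclidean norm. -/
open Matrix

private lemma sum_normSq_mulVec {m : Type*} [Fintype m] [DecidableEq m]
    (g : Matrix m m ℂ) (hg : g ∈ Matrix.unitaryGroup m ℂ) (u : m → ℂ) :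
    ∑ i, Complex.normSq ((g *ᵥ u) i) = ∑ i, Complex.normSq (u i) := by
  have h1 : gᴴ * g = 1 := by rw [← Matrix.star_eq_conjTranspose]; exact hg.1
  have key : star (g *ᵥ u) ⬝ᵥ (g *ᵥ u) = star u ⬝ᵥ u := by
    rw [Matrix.star_mulVec, Matrix.dotProduct_mulVec, Matrix.vecMul_vecMul, h1,
      Matrix.vecMul_one]
  have e : ∀ y : m → ℂ, (↑(∑ i, Complex.normSq (y i)) : ℂ) = star y ⬝ᵥ y := by
    intro y
    simp [dotProduct, Complex.normSq_eq_conj_mul_self]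
  exact_mod_cast ((e _).trans key).trans (e u).symm

/-- for a unitary colligation `g` and `|z| < 1`, the matrix `1 − z·D` is
invertible and the characteristic function `χ(g; z)` is a contraction in the Euclidean norm. -/
theorem charFun_contraction {α n : ℕ}
    (g : Matrix (Fin α ⊕ Fin n) (Fin α ⊕ Fin n) ℂ)
    (hg : g ∈ Matrix.unitaryGroup (Fin α ⊕ Fin n) ℂ)
    (z : ℂ) (hz : ‖z‖ < 1) :
    IsUnit (1 - z • g.toBlocks₂₂) ∧
      ∀ v : EuclideanSpace ℂ (Fin α), ‖Matrix.toEuclideanLin (charFun g z) v‖ ≤ ‖v‖ := by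
  set A := g.toBlocks₁₁
  set B := g.toBlocks₁₂
  set C := g.toBlocks₂₁
  set D := g.toBlocks₂₂
  have hgb : g = fromBlocks A B C D := (fromBlocks_toBlocks g).symm
  have hzsq : Complex.normSq z < 1 := by
    have : Complex.normSq z = ‖z‖ ^ 2 := (Complex.sq_norm z).symm
    nlinarith [norm_nonneg z]
  -- D is a contraction
  have hD : ∀ x : Fin n → ℂ,
      ∑ j, Complex.normSq ((D *ᵥ x) j) ≤ ∑ j, Complex.normSq (x j) := by
    intro x
    have := sum_normSq_mulVec g hg (Sum.elim 0 x)
    rw [hgb, fromBlocks_mulVec] at this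
    simp only [Sum.elim_comp_inl, Sum.elim_comp_inr, Matrix.mulVec_zero, zero_add, add_zero, Fintype.sum_sum_type,
      Sum.elim_inl, Sum.elim_inr, Pi.zero_apply, Complex.normSq_zero,
      Finset.sum_const_zero] at this
    have h0 : (0:ℝ) ≤ ∑ i, Complex.normSq ((B *ᵥ x) i) :=
      Finset.sum_nonneg fun _ _ => Complex.normSq_nonneg _
    linarith
  have hU : IsUnit (1 - z • D) := by
    rw [← Matrix.mulVec_injective_iff_isUnit]
    have hker : ∀ x : Fin n → ℂ, (1 - z • D) *ᵥ x = 0 → x = 0 := by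
      intro x hx
      have hx' : x = z • (D *ᵥ x) := by
        rw [Matrix.sub_mulVec, Matrix.one_mulVec, Matrix.smul_mulVec] at hx
        exact sub_eq_zero.mp hx
      have hs : ∑ j, Complex.normSq (x j) =
          Complex.normSq z * ∑ j, Complex.normSq ((D *ᵥ x) j) := by
        rw [Finset.mul_sum]
        conv_lhs => rw [hx']
        exact Finset.sum_congr rfl fun j _ => by
          simp [Pi.smul_apply, smul_eq_mul, Complex.normSq_mul]
      have hnn : (0:ℝ) ≤ ∑ j, Complex.normSq (x j) :=
        Finset.sum_nonneg fun _ _ => Complex.normSq_nonneg _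
      have hzero : ∑ j, Complex.normSq (x j) = 0 := by
        nlinarith [hD x, Complex.normSq_nonneg z]
      funext j
      have := (Finset.sum_eq_zero_iff_of_nonneg
        (fun i _ => Complex.normSq_nonneg (x i))).mp hzero j (Finset.mem_univ j)
      simpa [Complex.normSq_eq_zero] using this
    intro x y hxy
    have : (1 - z • D) *ᵥ (x - y) = 0 := by
      rw [Matrix.mulVec_sub, hxy, sub_self]
    have := hker _ this
    exact sub_eq_zero.mp this
  refine ⟨hU, fun v => ?_⟩
  have hdet : IsUnit (1 - z • D).det := (Matrix.isUnit_iff_isUnit_det _).mp hU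
  have hMul : (1 - z • D) * (1 - z • D)⁻¹ = 1 := Matrix.mul_nonsing_inv _ hdet
  set v' : Fin α → ℂ := (WithLp.equiv 2 _) v with hv'
  set h : Fin n → ℂ := (1 - z • D)⁻¹ *ᵥ (C *ᵥ v') with hh
  have hCv : (1 - z • D) *ᵥ h = C *ᵥ v' := by
    rw [hh, Matrix.mulVec_mulVec, hMul, Matrix.one_mulVec]
  have hsecond : C *ᵥ v' + z • (D *ᵥ h) = h := by
    rw [Matrix.sub_mulVec, Matrix.one_mulVec, Matrix.smul_mulVec] at hCv
    rw [← hCv]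
    abel
  have hfirst : (charFun g z) *ᵥ v' = A *ᵥ v' + z • (B *ᵥ h) := by
    show (A + z • (B * (1 - z • D)⁻¹ * C)) *ᵥ v' = _
    rw [Matrix.add_mulVec, Matrix.smul_mulVec, Matrix.mul_assoc,
      ← Matrix.mulVec_mulVec, ← Matrix.mulVec_mulVec, ← hh]
  have hgu : g *ᵥ (Sum.elim v' (z • h)) = Sum.elim ((charFun g z) *ᵥ v') h := by
    conv_lhs => rw [hgb, fromBlocks_mulVec]
    simp only [Sum.elim_comp_inl, Sum.elim_comp_inr]
    simp only [Matrix.mulVec_smul]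
    rw [hfirst, hsecond]
  have hsum := sum_normSq_mulVec g hg (Sum.elim v' (z • h))
  rw [hgu] at hsum
  simp only [Fintype.sum_sum_type, Sum.elim_inl, Sum.elim_inr] at hsum
  have hzh : ∑ j, Complex.normSq ((z • h) j) = Complex.normSq z * ∑ j, Complex.normSq (h j) := by
    rw [Finset.mul_sum]
    exact Finset.sum_congr rfl fun j _ => by
      simp [Pi.smul_apply, smul_eq_mul, Complex.normSq_mul]
  have hhnn : (0:ℝ) ≤ ∑ j, Complex.normSq (h j) :=
    Finset.sum_nonneg fun _ _ => Complex.normSq_nonneg _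
  have hkey : ∑ i, Complex.normSq (((charFun g z) *ᵥ v') i) ≤ ∑ i, Complex.normSq (v' i) := by
    rw [hzh] at hsum
    nlinarith
  rw [EuclideanSpace.norm_eq, EuclideanSpace.norm_eq]
  apply Real.sqrt_le_sqrt
  have e1 : ∀ (k : Type) [Fintype k] (y : k → ℂ),
      ∑ i, ‖y i‖ ^ 2 = ∑ i, Complex.normSq (y i) := by
    intro k _ y
    exact Finset.sum_congr rfl fun i _ => by
      rw [Complex.sq_norm]
  calc ∑ i, ‖(Matrix.toEuclideanLin (charFun g z) v) i‖ ^ 2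
      = ∑ i, Complex.normSq (((charFun g z) *ᵥ v') i) := by
        rw [e1]
        rfl
    _ ≤ ∑ i, Complex.normSq (v' i) := hkey
    _ = ∑ i, ‖v i‖ ^ 2 := by rw [e1]; rfl
end

section
/- Let α, n be natural numbers and let g = [[A,B],[C,D]] be a colligation of size (α,n) which is a unitary matrix. Let z ∈ ℂ with |z| = 1 be such that 1 − z·D is invertible. Then the characteristic function χ(g; z) is a unitary α×α matrix, i.e. χ(g; z)* · χ(g; z) = 1. -/
open Matrix

/-- for a unitary colligation `g` and `|z| = 1` with `1 − z·D` invertible,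
the characteristic function `χ(g; z)` is a unitary matrix. -/
theorem charFun_unitary {α n : ℕ}
    (g : Matrix (Fin α ⊕ Fin n) (Fin α ⊕ Fin n) ℂ)
    (hg : g ∈ Matrix.unitaryGroup (Fin α ⊕ Fin n) ℂ)
    (z : ℂ) (hz : ‖z‖ = 1) (hD : IsUnit (1 - z • g.toBlocks₂₂)) :
    (charFun g z)ᴴ * charFun g z = 1 := by
  classical
  simp only [charFun]
  set A := g.toBlocks₁₁ with hA
  set B := g.toBlocks₁₂ with hB
  set C := g.toBlocks₂₁ with hC
  set D := g.toBlocks₂₂ with hDd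
  have hgb : g = Matrix.fromBlocks A B C D := (Matrix.fromBlocks_toBlocks g).symm
  have hu : gᴴ * g = 1 := by
    have := hg.1
    rwa [Matrix.star_eq_conjTranspose] at this
  rw [hgb, Matrix.fromBlocks_conjTranspose, Matrix.fromBlocks_multiply,
      ← Matrix.fromBlocks_one] at hu
  have h11 : Aᴴ * A + Cᴴ * C = 1 := by
    have := congrArg Matrix.toBlocks₁₁ hu
    simp only [Matrix.toBlocks_fromBlocks₁₁] at this; exact this
  have h12 : Aᴴ * B + Cᴴ * D = 0 := by
    have := congrArg Matrix.toBlocks₁₂ hu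
    simp only [Matrix.toBlocks_fromBlocks₁₂] at this; exact this
  have h21 : Bᴴ * A + Dᴴ * C = 0 := by
    have := congrArg Matrix.toBlocks₂₁ hu
    simp only [Matrix.toBlocks_fromBlocks₂₁] at this; exact this
  have h22 : Bᴴ * B + Dᴴ * D = 1 := by
    have := congrArg Matrix.toBlocks₂₂ hu
    simp only [Matrix.toBlocks_fromBlocks₂₂] at this; exact this
  set N : Matrix (Fin n) (Fin n) ℂ := 1 - z • D with hN
  set M : Matrix (Fin n) (Fin n) ℂ := N⁻¹ with hM
  have hdet : IsUnit N.det := (Matrix.isUnit_iff_isUnit_det N).mp hD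
  have hNM : N * M = 1 := Matrix.mul_nonsing_inv N hdet
  have hMN : M * N = 1 := Matrix.nonsing_inv_mul N hdet
  have hMN' : Mᴴ * Nᴴ = 1 := by
    rw [← Matrix.conjTranspose_mul, hNM, Matrix.conjTranspose_one]
  have hzsq : Complex.normSq z = 1 := by
    rw [Complex.normSq_eq_norm_sq, hz]; norm_num
  have hz1 : star z * z = 1 := by
    rw [Complex.star_def, ← Complex.normSq_eq_conj_mul_self, hzsq]; norm_num
  have hz2 : z * star z = 1 := by rw [mul_comm]; exact hz1
  -- the key identity: Nᴴ N + z̄ Dᴴ N + z Nᴴ D = 1 - Dᴴ D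
  have hNN : Nᴴ * N + star z • (Dᴴ * N) + z • (Nᴴ * D) = 1 - Dᴴ * D := by
    rw [hN]
    simp only [Matrix.conjTranspose_sub, Matrix.conjTranspose_smul, Matrix.conjTranspose_one,
      sub_mul, mul_sub, one_mul, mul_one, Matrix.smul_mul, Matrix.mul_smul, smul_sub,
      smul_smul, hz1, hz2, one_smul]
    abel
  have key : Mᴴ * ((1 - Dᴴ * D) * M) = 1 + star z • (Mᴴ * Dᴴ) + z • (D * M) := by
    rw [← hNN]
    simp only [Matrix.add_mul, Matrix.mul_add, Matrix.smul_mul, Matrix.mul_smul,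
      Matrix.mul_assoc, hNM, Matrix.mul_one]
    rw [← Matrix.mul_assoc Mᴴ Nᴴ (D * M), hMN', Matrix.one_mul]
  -- abbreviate the correction term
  set X : Matrix (Fin α) (Fin α) ℂ := B * M * C with hX
  have hAB : Aᴴ * B = -(Cᴴ * D) := eq_neg_of_add_eq_zero_left h12
  have hBA : Bᴴ * A = -(Dᴴ * C) := eq_neg_of_add_eq_zero_left h21
  have hBB : Bᴴ * B = 1 - Dᴴ * D := eq_sub_of_add_eq h22
  have hAA : Aᴴ * A = 1 - Cᴴ * C := eq_sub_of_add_eq h11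
  have e1 : Aᴴ * X = -(Cᴴ * (D * (M * C))) := by
    rw [hX, Matrix.mul_assoc B M C, ← Matrix.mul_assoc Aᴴ B (M * C), hAB]
    simp [Matrix.neg_mul, Matrix.mul_assoc]
  have e2 : Xᴴ * A = -(Cᴴ * (Mᴴ * (Dᴴ * C))) := by
    rw [hX]
    simp only [Matrix.conjTranspose_mul, Matrix.mul_assoc]
    rw [hBA]
    simp [Matrix.mul_neg]
  have e3 : Xᴴ * X = Cᴴ * C + star z • (Cᴴ * (Mᴴ * (Dᴴ * C))) + z • (Cᴴ * (D * (M * C))) := by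
    rw [hX]
    simp only [Matrix.conjTranspose_mul, Matrix.mul_assoc]
    rw [← Matrix.mul_assoc Bᴴ B (M * C), hBB,
        show (1 - Dᴴ * D) * (M * C) = ((1 - Dᴴ * D) * M) * C by rw [Matrix.mul_assoc],
        ← Matrix.mul_assoc Mᴴ ((1 - Dᴴ * D) * M) C,
        key]
    simp only [Matrix.add_mul, Matrix.one_mul, Matrix.smul_mul, Matrix.mul_add,
      Matrix.mul_smul, Matrix.mul_assoc]
  have hexp : (A + z • X)ᴴ * (A + z • X)
      = Aᴴ * A + z • (Aᴴ * X) + star z • (Xᴴ * A) + Xᴴ * X := by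
    simp only [Matrix.conjTranspose_add, Matrix.conjTranspose_smul, Matrix.add_mul,
      Matrix.mul_add, Matrix.smul_mul, Matrix.mul_smul, smul_smul, smul_add,
      hz1, hz2, one_smul]
    abel
  rw [hexp, hAA, e1, e2, e3]
  simp only [smul_neg, smul_add]
  abel
end

section
/- Let α, n be natural numbers and let g = [[A,B],[C,D]] be a colligation of size (α,n) which is a unitary matrix. Let z ∈ ℂ, z ≠ 0, be such that both 1 − z·D and 1 − (conj z)⁻¹·D are invertible. Then the following Riemann–Schwarz type identity holds: χ(g; (conj z)⁻¹) · (χ(g; z))* = 1, i.e. χ(g; (conj z)⁻¹) is the inverse of the conjugate transpose of χ(g; z). -/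
open Matrix

set_option maxHeartbeats 1000000 in
/-- the Riemann–Schwarz type identity for the characteristic function of a
unitary colligation: `χ(g; (conj z)⁻¹) · χ(g; z)* = 1`. -/
theorem charFun_schwarz {α n : ℕ}
    (g : Matrix (Fin α ⊕ Fin n) (Fin α ⊕ Fin n) ℂ)
    (hg : g ∈ Matrix.unitaryGroup (Fin α ⊕ Fin n) ℂ)
    (z : ℂ) (hz : z ≠ 0)
    (hD : IsUnit (1 - z • g.toBlocks₂₂))
    (hD' : IsUnit (1 - ((starRingEnd ℂ) z)⁻¹ • g.toBlocks₂₂)) :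
    charFun g (((starRingEnd ℂ) z)⁻¹) * (charFun g z)ᴴ = 1 := by
  set A := g.toBlocks₁₁ with hA
  set B := g.toBlocks₁₂ with hB
  set C := g.toBlocks₂₁ with hC
  set D := g.toBlocks₂₂ with hDef
  set zb := (starRingEnd ℂ) z with hzb
  set w := zb⁻¹ with hwdef
  have hzb0 : zb ≠ 0 := by simpa [hzb] using hz
  have hw : w * zb = 1 := inv_mul_cancel₀ hzb0
  have hw' : zb * w = 1 := mul_inv_cancel₀ hzb0
  -- block relations from unitarity
  have hgg : g * gᴴ = 1 := by
    have := (Matrix.mem_unitaryGroup_iff).mp hg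
    simpa [Matrix.star_eq_conjTranspose] using this
  have hblocks : fromBlocks (A * Aᴴ + B * Bᴴ) (A * Cᴴ + B * Dᴴ)
      (C * Aᴴ + D * Bᴴ) (C * Cᴴ + D * Dᴴ) = fromBlocks 1 0 0 1 := by
    have e : fromBlocks A B C D * fromBlocks Aᴴ Cᴴ Bᴴ Dᴴ = 1 := by
      rw [← Matrix.fromBlocks_conjTranspose, hA, hB, hC, hDef, Matrix.fromBlocks_toBlocks]
      exact hgg
    rw [Matrix.fromBlocks_multiply] at e
    rw [e, Matrix.fromBlocks_one]
  have h1 : A * Aᴴ + B * Bᴴ = 1 := by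
    have := congrArg Matrix.toBlocks₁₁ hblocks
    simpa only [Matrix.toBlocks_fromBlocks₁₁] using this
  have h2 : A * Cᴴ + B * Dᴴ = 0 := by
    have := congrArg Matrix.toBlocks₁₂ hblocks
    simpa only [Matrix.toBlocks_fromBlocks₁₂] using this
  have h3 : C * Aᴴ + D * Bᴴ = 0 := by
    have := congrArg Matrix.toBlocks₂₁ hblocks
    simpa only [Matrix.toBlocks_fromBlocks₂₁] using this
  have h4 : C * Cᴴ + D * Dᴴ = 1 := by
    have := congrArg Matrix.toBlocks₂₂ hblocks
    simpa only [Matrix.toBlocks_fromBlocks₂₂] using this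
  set M : Matrix (Fin n) (Fin n) ℂ := 1 - w • D with hM
  set N : Matrix (Fin n) (Fin n) ℂ := 1 - zb • Dᴴ with hN
  have hMu : IsUnit M := hD'
  have hNu : IsUnit N := by
    have : N = (1 - z • D)ᴴ := by
      simp [hN, Matrix.conjTranspose_smul, hzb]
    rw [this]
    exact (Matrix.isUnit_conjTranspose _).mpr hD
  have hMM : M * M⁻¹ = 1 := Matrix.mul_nonsing_inv M ((Matrix.isUnit_iff_isUnit_det M).mp hMu)
  have hMM' : M⁻¹ * M = 1 := Matrix.nonsing_inv_mul M ((Matrix.isUnit_iff_isUnit_det M).mp hMu)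
  have hNN : N * N⁻¹ = 1 := Matrix.mul_nonsing_inv N ((Matrix.isUnit_iff_isUnit_det N).mp hNu)
  have hNN' : N⁻¹ * N = 1 := Matrix.nonsing_inv_mul N ((Matrix.isUnit_iff_isUnit_det N).mp hNu)
  -- key identity
  have hfact : M * (1 + w • (M⁻¹ * D) + zb • (Dᴴ * N⁻¹)) * N = 1 - D * Dᴴ := by
    have e1 : M * (1 + w • (M⁻¹ * D) + zb • (Dᴴ * N⁻¹))
        = M + w • D + zb • (M * (Dᴴ * N⁻¹)) := by
      rw [mul_add, mul_add, mul_one, mul_smul_comm, mul_smul_comm, ← mul_assoc, hMM, one_mul]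
    rw [e1]
    rw [add_mul, add_mul, smul_mul_assoc, smul_mul_assoc, mul_assoc, mul_assoc, hNN', mul_one]
    rw [hM, hN]
    simp only [sub_mul, mul_sub, one_mul, mul_one, smul_mul_assoc, mul_smul_comm, smul_smul,
      smul_sub, sub_smul, one_smul]
    rw [show w * zb = 1 from hw, show zb * w = 1 from hw']
    simp only [one_smul]
    abel
  have key : M⁻¹ * (1 - D * Dᴴ) * N⁻¹ = 1 + w • (M⁻¹ * D) + zb • (Dᴴ * N⁻¹) := by
    rw [← hfact]
    calc M⁻¹ * (M * (1 + w • (M⁻¹ * D) + zb • (Dᴴ * N⁻¹)) * N) * N⁻¹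
        = (M⁻¹ * M) * (1 + w • (M⁻¹ * D) + zb • (Dᴴ * N⁻¹)) * (N * N⁻¹) := by
          simp only [Matrix.mul_assoc]
      _ = 1 + w • (M⁻¹ * D) + zb • (Dᴴ * N⁻¹) := by rw [hMM', hNN, one_mul, mul_one]
  -- conjugate transpose of charFun g z
  have hchz : (charFun g z)ᴴ = Aᴴ + zb • (Cᴴ * N⁻¹ * Bᴴ) := by
    have hinv : ((1 - z • D)⁻¹)ᴴ = N⁻¹ := by
      rw [Matrix.conjTranspose_nonsing_inv]
      congr 1
      simp [hN, Matrix.conjTranspose_smul, hzb]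
    rw [charFun]
    rw [Matrix.conjTranspose_add, Matrix.conjTranspose_smul]
    congr 1
    rw [Matrix.conjTranspose_mul, Matrix.conjTranspose_mul, hinv]
    rw [← Matrix.mul_assoc]
    rfl
  have hchw : charFun g w = A + w • (B * M⁻¹ * C) := rfl
  rw [hchw, hchz]
  have hAA' : A * Aᴴ = 1 - B * Bᴴ := eq_sub_of_add_eq h1
  have hAC' : A * Cᴴ = -(B * Dᴴ) := eq_neg_of_add_eq_zero_left h2
  have hCA' : C * Aᴴ = -(D * Bᴴ) := eq_neg_of_add_eq_zero_left h3
  have hCC' : C * Cᴴ = 1 - D * Dᴴ := eq_sub_of_add_eq h4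
  have T1 : A * (Cᴴ * N⁻¹ * Bᴴ) = -(B * (Dᴴ * N⁻¹) * Bᴴ) := by
    have e : A * (Cᴴ * N⁻¹ * Bᴴ) = (A * Cᴴ) * (N⁻¹ * Bᴴ) := by
      simp only [Matrix.mul_assoc]
    rw [e, hAC']
    simp only [Matrix.neg_mul, Matrix.mul_assoc]
  have T2 : B * M⁻¹ * C * Aᴴ = -(B * (M⁻¹ * D) * Bᴴ) := by
    rw [Matrix.mul_assoc, hCA']
    simp only [Matrix.mul_neg, Matrix.neg_mul, Matrix.mul_assoc]
  have T3 : B * M⁻¹ * C * (Cᴴ * N⁻¹ * Bᴴ)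
      = B * Bᴴ + w • (B * (M⁻¹ * D) * Bᴴ) + zb • (B * (Dᴴ * N⁻¹) * Bᴴ) := by
    have e : B * M⁻¹ * C * (Cᴴ * N⁻¹ * Bᴴ) = B * (M⁻¹ * (C * Cᴴ) * N⁻¹) * Bᴴ := by
      simp only [Matrix.mul_assoc]
    rw [e, hCC', key]
    simp only [Matrix.mul_add, Matrix.add_mul, Matrix.mul_one, Matrix.one_mul,
      Matrix.mul_smul, Matrix.smul_mul, Matrix.mul_assoc]
  simp only [Matrix.add_mul, Matrix.mul_add, smul_mul_assoc, mul_smul_comm]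
  rw [hAA', T1, T2, T3]
  match_scalars <;> field_simp [hwdef] <;> simp [hw, hw']
end

section
/- Let α, N, k be natural numbers, let 𝔄 = (g_1,…,g_k) be a multiple colligation of size (α,N,k), and let u be an N×N unitary matrix. Let 𝔄' be the multiple colligation whose j-th matrix is [[1,0],[0,u]]·g_j·[[1,0],[0,u]]⁻¹, with blocks (a_j, b_j·u⁻¹, u·c_j, u·d_j·u⁻¹). Then for every k×k matrix S such that S̃ − d̃ is invertible, the matrix S̃ − d̃' (where d̃' is the block-diagonal matrix of the u·d_j·u⁻¹) is also invertible and χ(𝔄'; S) = χ(𝔄; S). Thus the multivariate characteristic function depends only on the equivalence class of 𝔄 under simultaneous conjugation by matrices diag(1,u). -/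
open Matrix

/-- Block-diagonal matrix `ã` of the `a`-blocks of a multiple colligation. -/
noncomputable def aT {k : ℕ} {A I : Type*} [DecidableEq (Fin k)]
    (g : Fin k → Matrix (A ⊕ I) (A ⊕ I) ℂ) : Matrix (A × Fin k) (A × Fin k) ℂ :=
  blockDiagonal fun j => (g j).toBlocks₁₁

/-- Block-diagonal matrix `b̃` of the `b`-blocks of a multiple colligation. -/
noncomputable def bT {k : ℕ} {A I : Type*}
    (g : Fin k → Matrix (A ⊕ I) (A ⊕ I) ℂ) : Matrix (A × Fin k) (I × Fin k) ℂ :=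
  blockDiagonal fun j => (g j).toBlocks₁₂

/-- Block-diagonal matrix `c̃` of the `c`-blocks of a multiple colligation. -/
noncomputable def cT {k : ℕ} {A I : Type*}
    (g : Fin k → Matrix (A ⊕ I) (A ⊕ I) ℂ) : Matrix (I × Fin k) (A × Fin k) ℂ :=
  blockDiagonal fun j => (g j).toBlocks₂₁

/-- Block-diagonal matrix `d̃` of the `d`-blocks of a multiple colligation. -/
noncomputable def dT {k : ℕ} {A I : Type*}
    (g : Fin k → Matrix (A ⊕ I) (A ⊕ I) ℂ) : Matrix (I × Fin k) (I × Fin k) ℂ :=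
  blockDiagonal fun j => (g j).toBlocks₂₂

/-- `S̃`: the Kronecker-type block matrix whose `(i,j)` block is `s_{ij} · 1`. -/
def sT {k : ℕ} (I : Type*) [DecidableEq I] (S : Matrix (Fin k) (Fin k) ℂ) :
    Matrix (I × Fin k) (I × Fin k) ℂ :=
  Matrix.of fun p q => if p.1 = q.1 then S p.2 q.2 else 0

/-- The multivariate characteristic function `χ(𝔄; S) = ã + b̃·(S̃ − d̃)⁻¹·c̃`. -/
noncomputable def chiM {k : ℕ} {A I : Type*} [Fintype A] [Fintype I] [DecidableEq I]
    (g : Fin k → Matrix (A ⊕ I) (A ⊕ I) ℂ) (S : Matrix (Fin k) (Fin k) ℂ) :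
    Matrix (A × Fin k) (A × Fin k) ℂ :=
  aT g + bT g * (sT I S - dT g)⁻¹ * cT g


section Aux

open Matrix

variable {N k : ℕ}

lemma sT_comm_blockDiagonal (S : Matrix (Fin k) (Fin k) ℂ) (u : Matrix (Fin N) (Fin N) ℂ) :
    sT (Fin N) S * blockDiagonal (fun _ : Fin k => u)
      = blockDiagonal (fun _ : Fin k => u) * sT (Fin N) S := by
  ext ⟨i, j⟩ ⟨i', j'⟩
  simp only [sT, Matrix.mul_apply, blockDiagonal_apply, of_apply, Fintype.sum_prod_type]
  simp [Finset.sum_ite_eq, Finset.sum_ite_eq', mul_comm]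

end Aux

/-- the multivariate characteristic function is invariant under simultaneous
conjugation of the multiple colligation by a block-diagonal unitary `diag(1, u)`. -/
theorem chiM_conj_invariant {α N k : ℕ}
    (g : Fin k → Matrix (Fin α ⊕ Fin N) (Fin α ⊕ Fin N) ℂ)
    (u : Matrix (Fin N) (Fin N) ℂ) (hu : u ∈ Matrix.unitaryGroup (Fin N) ℂ)
    (S : Matrix (Fin k) (Fin k) ℂ)
    (hS : IsUnit (sT (Fin N) S - dT g)) :
    IsUnit (sT (Fin N) S
        - dT (fun j => fromBlocks 1 0 0 u * g j * (fromBlocks 1 0 0 u)⁻¹)) ∧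
      chiM (fun j => fromBlocks 1 0 0 u * g j * (fromBlocks 1 0 0 u)⁻¹) S = chiM g S := by
  classical
  set g' := fun j => fromBlocks (1 : Matrix (Fin α) (Fin α) ℂ) 0 0 u * g j *
      (fromBlocks 1 0 0 u)⁻¹ with hg'
  set U : Matrix (Fin N × Fin k) (Fin N × Fin k) ℂ := blockDiagonal (fun _ : Fin k => u) with hUdef
  set V : Matrix (Fin N × Fin k) (Fin N × Fin k) ℂ := blockDiagonal (fun _ : Fin k => u⁻¹) with hVdef
  have hur : u * star u = 1 := (Matrix.mem_unitaryGroup_iff.mp hu)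
  have hdetu : IsUnit u.det := Matrix.isUnit_det_of_right_inverse hur
  have hui : u * u⁻¹ = 1 := Matrix.mul_nonsing_inv u hdetu
  have hiu : u⁻¹ * u = 1 := Matrix.nonsing_inv_mul u hdetu
  have hUV : U * V = 1 := by
    rw [hUdef, hVdef, ← Matrix.blockDiagonal_mul]
    have h : (fun _ : Fin k => u * u⁻¹) = fun _ : Fin k => (1 : Matrix (Fin N) (Fin N) ℂ) := by
      funext; rw [hui]
    rw [h]; exact Matrix.blockDiagonal_one
  have hVU : V * U = 1 := by
    rw [hVdef, hUdef, ← Matrix.blockDiagonal_mul]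
    have h : (fun _ : Fin k => u⁻¹ * u) = fun _ : Fin k => (1 : Matrix (Fin N) (Fin N) ℂ) := by
      funext; rw [hiu]
    rw [h]; exact Matrix.blockDiagonal_one
  have hF : (fromBlocks (1 : Matrix (Fin α) (Fin α) ℂ) 0 0 u)⁻¹ = fromBlocks 1 0 0 u⁻¹ := by
    apply Matrix.inv_eq_right_inv
    simp [Matrix.fromBlocks_multiply, hui]
  have hg : ∀ j, g' j = fromBlocks ((g j).toBlocks₁₁) ((g j).toBlocks₁₂ * u⁻¹)
      (u * (g j).toBlocks₂₁) (u * (g j).toBlocks₂₂ * u⁻¹) := by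
    intro j
    show fromBlocks 1 0 0 u * g j * (fromBlocks 1 0 0 u)⁻¹ = _
    rw [hF]
    conv_lhs => rw [← fromBlocks_toBlocks (g j)]
    simp [Matrix.fromBlocks_multiply, Matrix.mul_assoc]
  have haT : aT g' = aT g := by
    unfold aT
    refine congrArg _ (funext fun j => ?_)
    rw [hg j, Matrix.toBlocks_fromBlocks₁₁]
  have hbT : bT g' = bT g * V := by
    unfold bT
    rw [hVdef, ← Matrix.blockDiagonal_mul]
    refine congrArg _ (funext fun j => ?_)
    rw [hg j, Matrix.toBlocks_fromBlocks₁₂]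
  have hcT : cT g' = U * cT g := by
    unfold cT
    rw [hUdef, ← Matrix.blockDiagonal_mul]
    refine congrArg _ (funext fun j => ?_)
    rw [hg j, Matrix.toBlocks_fromBlocks₂₁]
  have hdT : dT g' = U * dT g * V := by
    unfold dT
    rw [hUdef, hVdef, ← Matrix.blockDiagonal_mul, ← Matrix.blockDiagonal_mul]
    refine congrArg _ (funext fun j => ?_)
    rw [hg j, Matrix.toBlocks_fromBlocks₂₂]
  have hsUV : U * sT (Fin N) S * V = sT (Fin N) S := by
    rw [← sT_comm_blockDiagonal S u, ← hUdef, Matrix.mul_assoc, hUV, Matrix.mul_one]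
  set X := sT (Fin N) S - dT g with hX
  have hkey : sT (Fin N) S - dT g' = U * X * V := by
    rw [hdT, hX, Matrix.mul_sub, Matrix.sub_mul, hsUV]
  have hUunit : IsUnit U := ⟨⟨U, V, hUV, hVU⟩, rfl⟩
  have hVunit : IsUnit V := ⟨⟨V, U, hVU, hUV⟩, rfl⟩
  have hunit : IsUnit (sT (Fin N) S - dT g') := by
    rw [hkey]; exact (hUunit.mul hS).mul hVunit
  refine ⟨hunit, ?_⟩
  have hXX : X * X⁻¹ = 1 := Matrix.mul_nonsing_inv X ((Matrix.isUnit_iff_isUnit_det X).mp hS)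
  have hinv : (sT (Fin N) S - dT g')⁻¹ = U * X⁻¹ * V := by
    rw [hkey]
    apply Matrix.inv_eq_right_inv
    calc U * X * V * (U * X⁻¹ * V)
        = U * (X * ((V * U) * (X⁻¹ * V))) := by simp only [Matrix.mul_assoc]
      _ = U * (X * X⁻¹) * V := by rw [hVU, Matrix.one_mul]; simp only [Matrix.mul_assoc]
      _ = 1 := by rw [hXX, Matrix.mul_one, hUV]
  unfold chiM
  rw [haT, hbT, hcT, hinv, ← hX]
  congr 1
  calc bT g * V * (U * X⁻¹ * V) * (U * cT g)
      = bT g * ((V * U) * (X⁻¹ * ((V * U) * cT g))) := by simp only [Matrix.mul_assoc]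
    _ = bT g * (sT (Fin N) S - dT g)⁻¹ * cT g := by
        rw [hVU, Matrix.one_mul, Matrix.one_mul, hX, Matrix.mul_assoc]
end

section
/- Let α, N, M, k be natural numbers, let 𝔄 = (g_1,…,g_k) be a multiple colligation of size (α,N,k) and 𝔓 = (h_1,…,h_k) a multiple colligation of size (α,M,k). Let 𝔄∘𝔓 be the multiple colligation of size (α,N+M,k) whose j-th matrix is g_j∘h_j (the product of colligations). Let S be a k×k matrix such that both S̃_N − d̃_𝔄 and S̃_M − d̃_𝔓 are invertible (where S̃_N, S̃_M are the Kronecker products of S with the identity of size N, M, and d̃_𝔄, d̃_𝔓 are the respective block-diagonal d-blocks). Then S̃_{N+M} − d̃_{𝔄∘𝔓} is invertible and χ(𝔄; S) · χ(𝔓; S) = χ(𝔄∘𝔓; S). -/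
open Matrix

private lemma aT_colProd {α N M k : ℕ}
    (g : Fin k → Matrix (Fin α ⊕ Fin N) (Fin α ⊕ Fin N) ℂ)
    (h : Fin k → Matrix (Fin α ⊕ Fin M) (Fin α ⊕ Fin M) ℂ) :
    aT (fun j => colProd (g j) (h j)) = aT g * aT h := by
  unfold aT
  rw [← blockDiagonal_mul]
  rfl

private lemma dT_colProd {α N M k : ℕ}
    (g : Fin k → Matrix (Fin α ⊕ Fin N) (Fin α ⊕ Fin N) ℂ)
    (h : Fin k → Matrix (Fin α ⊕ Fin M) (Fin α ⊕ Fin M) ℂ)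
    (S : Matrix (Fin k) (Fin k) ℂ) :
    sT (Fin N ⊕ Fin M) S - dT (fun j => colProd (g j) (h j)) =
      (fromBlocks (sT (Fin N) S - dT g) (-(cT g * bT h)) 0
        (sT (Fin M) S - dT h)).submatrix
        (Equiv.sumProdDistrib (Fin N) (Fin M) (Fin k))
        (Equiv.sumProdDistrib (Fin N) (Fin M) (Fin k)) := by
  have hcb : cT g * bT h =
      blockDiagonal (fun j => (g j).toBlocks₂₁ * (h j).toBlocks₁₂) := by
    unfold cT bT; rw [blockDiagonal_mul]
  rw [hcb]
  ext ⟨i, j₁⟩ ⟨i', j₂⟩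
  rcases i with n | m <;> rcases i' with n' | m' <;>
    simp [-blockDiagonal_mul, sT, dT, colProd, blockDiagonal_apply,
      Equiv.sumProdDistrib]

private lemma bT_colProd {α N M k : ℕ}
    (g : Fin k → Matrix (Fin α ⊕ Fin N) (Fin α ⊕ Fin N) ℂ)
    (h : Fin k → Matrix (Fin α ⊕ Fin M) (Fin α ⊕ Fin M) ℂ) :
    bT (fun j => colProd (g j) (h j)) =
      (fromCols (bT g) (aT g * bT h)).submatrix id
        (Equiv.sumProdDistrib (Fin N) (Fin M) (Fin k)) := by
  have hab : aT g * bT h =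
      blockDiagonal (fun j => (g j).toBlocks₁₁ * (h j).toBlocks₁₂) := by
    unfold aT bT; rw [blockDiagonal_mul]
  rw [hab]
  ext ⟨a, j₁⟩ ⟨i, j₂⟩
  rcases i with n | m <;>
    simp [-blockDiagonal_mul, bT, aT, colProd, blockDiagonal_apply,
      Equiv.sumProdDistrib, fromCols]

private lemma cT_colProd {α N M k : ℕ}
    (g : Fin k → Matrix (Fin α ⊕ Fin N) (Fin α ⊕ Fin N) ℂ)
    (h : Fin k → Matrix (Fin α ⊕ Fin M) (Fin α ⊕ Fin M) ℂ) :
    cT (fun j => colProd (g j) (h j)) =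
      (fromRows (cT g * aT h) (cT h)).submatrix
        (Equiv.sumProdDistrib (Fin N) (Fin M) (Fin k)) id := by
  have hca : cT g * aT h =
      blockDiagonal (fun j => (g j).toBlocks₂₁ * (h j).toBlocks₁₁) := by
    unfold cT aT; rw [blockDiagonal_mul]
  rw [hca]
  ext ⟨i, j₁⟩ ⟨a, j₂⟩
  rcases i with n | m <;>
    simp [-blockDiagonal_mul, cT, aT, colProd, blockDiagonal_apply,
      Equiv.sumProdDistrib]

/-- multiplicativity of the multivariate characteristic function:
`χ(𝔄; S) · χ(𝔓; S) = χ(𝔄∘𝔓; S)`, where `𝔄∘𝔓` is the elementwise product of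
multiple colligations. -/
theorem chiM_mul {α N M k : ℕ}
    (g : Fin k → Matrix (Fin α ⊕ Fin N) (Fin α ⊕ Fin N) ℂ)
    (h : Fin k → Matrix (Fin α ⊕ Fin M) (Fin α ⊕ Fin M) ℂ)
    (S : Matrix (Fin k) (Fin k) ℂ)
    (hg : IsUnit (sT (Fin N) S - dT g)) (hh : IsUnit (sT (Fin M) S - dT h)) :
    IsUnit (sT (Fin N ⊕ Fin M) S - dT (fun j => colProd (g j) (h j))) ∧
      chiM g S * chiM h S = chiM (fun j => colProd (g j) (h j)) S := by
  set E := sT (Fin N) S - dT g with hE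
  set F := sT (Fin M) S - dT h with hF
  set e := Equiv.sumProdDistrib (Fin N) (Fin M) (Fin k) with he
  have hY : IsUnit (fromBlocks E (-(cT g * bT h)) 0 F) :=
    isUnit_fromBlocks_zero₂₁.mpr ⟨hg, hh⟩
  constructor
  · rw [dT_colProd]
    exact (isUnit_submatrix_equiv e e).mpr hY
  · have hYinv : (fromBlocks E (-(cT g * bT h)) 0 F)⁻¹ =
        fromBlocks E⁻¹ (E⁻¹ * (cT g * (bT h * F⁻¹))) 0 F⁻¹ := by
      rw [inv_fromBlocks_zero₂₁_of_isUnit_iff _ _ _ (iff_of_true hg hh)]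
      simp only [Matrix.neg_mul, Matrix.mul_neg, neg_neg, Matrix.mul_assoc]
    rw [chiM, chiM, chiM, aT_colProd, dT_colProd, bT_colProd, cT_colProd,
      inv_submatrix_equiv, hYinv, submatrix_mul_equiv, submatrix_mul_equiv,
      submatrix_id_id, fromCols_mul_fromBlocks, fromCols_mul_fromRows]
    rw [← hE, ← hF]
    simp only [Matrix.mul_zero, add_zero, Matrix.mul_add, Matrix.add_mul,
      Matrix.mul_assoc]
    abel
end

section
/- Let α, N, k be natural numbers and let 𝔄 = (g_1,…,g_k) be a multiple colligation of size (α,N,k) in which every g_j is a unitary matrix. Let S be a k×k complex matrix which is a contraction (for every v ∈ ℂ^k, ‖S·v‖ ≤ ‖v‖ in Euclidean norm) and such that S̃ − d̃ is invertible. Then the characteristic function is expanding: for every vector p ∈ ℂ^{kα}, ‖χ(𝔄; S)·p‖ ≥ ‖p‖ in the Euclidean norm. In particular χ(𝔄; S) is invertible and ‖χ(𝔄; S)⁻¹·q‖ ≤ ‖q‖ for every q ∈ ℂ^{kα}. -/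
open Matrix

/-! ### Auxiliary lemmas -/

/-- Sum of squared norms of the entries of a complex vector. -/
noncomputable def nsq {ι : Type*} [Fintype ι] (v : ι → ℂ) : ℝ := ∑ i, ‖v i‖^2

lemma nsq_nonneg {ι : Type*} [Fintype ι] (v : ι → ℂ) : 0 ≤ nsq v :=
  Finset.sum_nonneg fun _ _ => sq_nonneg _

lemma nsq_eq_re {ι : Type*} [Fintype ι] (v : ι → ℂ) : nsq v = (star v ⬝ᵥ v).re := by
  simp [nsq, dotProduct, Complex.re_sum, mul_comm, Complex.mul_conj, Complex.sq_norm]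

lemma euclid_norm_sq {ι : Type*} [Fintype ι] (v : EuclideanSpace ℂ ι) :
    ‖v‖^2 = nsq v := by
  rw [EuclideanSpace.norm_eq, Real.sq_sqrt (Finset.sum_nonneg fun _ _ => sq_nonneg _)]
  rfl

lemma euclid_norm_le {ι : Type*} [Fintype ι] (v w : EuclideanSpace ℂ ι)
    (h : nsq (v : ι → ℂ) ≤ nsq (w : ι → ℂ)) : ‖v‖ ≤ ‖w‖ := by
  rw [EuclideanSpace.norm_eq, EuclideanSpace.norm_eq]
  exact Real.sqrt_le_sqrt h

lemma nsq_mulVec_unitary {ι : Type*} [Fintype ι] [DecidableEq ι] {M : Matrix ι ι ℂ}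
    (hM : Mᴴ * M = 1) (v : ι → ℂ) : nsq (M *ᵥ v) = nsq v := by
  rw [nsq_eq_re, nsq_eq_re]
  congr 1
  rw [star_mulVec, dotProduct_mulVec, vecMul_vecMul, hM, vecMul_one]

lemma nsq_eq_zero {ι : Type*} [Fintype ι] {v : ι → ℂ} (h : nsq v ≤ 0) : v = 0 := by
  have h0 : nsq v = 0 := le_antisymm h (nsq_nonneg v)
  funext i
  have := (Finset.sum_eq_zero_iff_of_nonneg
    (fun i _ => sq_nonneg ‖v i‖)).mp h0 i (Finset.mem_univ i)
  simpa using this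

lemma blockDiagonal_mulVec_apply {k : ℕ} {X Y : Type*} [Fintype X] [Fintype Y]
    (M : Fin k → Matrix X Y ℂ) (v : Y × Fin k → ℂ) (x : X) (j : Fin k) :
    (blockDiagonal M *ᵥ v) (x, j) = (M j *ᵥ fun y => v (y, j)) x := by
  simp [mulVec, dotProduct, Fintype.sum_prod_type, blockDiagonal_apply, ite_mul,
    Finset.sum_ite_eq, Finset.sum_ite_eq']

lemma sT_mulVec_apply {k : ℕ} {I : Type*} [Fintype I] [DecidableEq I]
    (S : Matrix (Fin k) (Fin k) ℂ) (v : I × Fin k → ℂ) (i : I) (j : Fin k) :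
    (sT I S *ᵥ v) (i, j) = (S *ᵥ fun l => v (i, l)) j := by
  simp [sT, mulVec, dotProduct, Fintype.sum_prod_type, ite_mul, Finset.sum_ite_eq,
    Finset.sum_ite_eq', Finset.mul_sum]

lemma nsq_prod {ι κ : Type*} [Fintype ι] [Fintype κ] (v : ι × κ → ℂ) :
    nsq v = ∑ i, nsq (fun l => v (i, l)) := by
  simp [nsq, Fintype.sum_prod_type]

lemma nsq_sum_prod {X Y κ : Type*} [Fintype X] [Fintype Y] [Fintype κ]
    (w : (X ⊕ Y) × κ → ℂ) :
    nsq w = nsq (fun p : X × κ => w (Sum.inl p.1, p.2))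
      + nsq (fun p : Y × κ => w (Sum.inr p.1, p.2)) := by
  simp [nsq, Fintype.sum_prod_type, Fintype.sum_sum_type]

lemma mulVec_sum_elim {X Y : Type*} [Fintype X] [Fintype Y]
    (M : Matrix (X ⊕ Y) (X ⊕ Y) ℂ) (u : X → ℂ) (v : Y → ℂ) :
    M *ᵥ Sum.elim u v = Sum.elim (M.toBlocks₁₁ *ᵥ u + M.toBlocks₁₂ *ᵥ v)
      (M.toBlocks₂₁ *ᵥ u + M.toBlocks₂₂ *ᵥ v) := by
  conv_lhs => rw [← fromBlocks_toBlocks M]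
  exact fromBlocks_mulVec _ _ _ _ _

/-- for a multiple colligation of unitary matrices and a contractive `S`
with `S̃ − d̃` invertible, the characteristic function `χ(𝔄; S)` is expanding; in
particular it is invertible and its inverse is a contraction. -/
theorem chiM_expanding {α N k : ℕ}
    (g : Fin k → Matrix (Fin α ⊕ Fin N) (Fin α ⊕ Fin N) ℂ)
    (hg : ∀ j, g j ∈ Matrix.unitaryGroup (Fin α ⊕ Fin N) ℂ)
    (S : Matrix (Fin k) (Fin k) ℂ)
    (hScontr : ∀ v : EuclideanSpace ℂ (Fin k), ‖Matrix.toEuclideanLin S v‖ ≤ ‖v‖)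
    (hinv : IsUnit (sT (Fin N) S - dT g)) :
    (∀ p : EuclideanSpace ℂ (Fin α × Fin k),
        ‖p‖ ≤ ‖Matrix.toEuclideanLin (chiM g S) p‖) ∧
      IsUnit (chiM g S) ∧
      ∀ q : EuclideanSpace ℂ (Fin α × Fin k),
        ‖Matrix.toEuclideanLin (chiM g S)⁻¹ q‖ ≤ ‖q‖ := by
  classical
  -- the big block-diagonal matrix is unitary
  have hGu : (blockDiagonal g)ᴴ * blockDiagonal g = 1 := by
    rw [blockDiagonal_conjTranspose, ← blockDiagonal_mul, ← blockDiagonal_one]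
    have hgg : (fun j => (g j)ᴴ * g j)
        = fun _ : Fin k => (1 : Matrix (Fin α ⊕ Fin N) (Fin α ⊕ Fin N) ℂ) := by
      funext j
      have h1 := (Unitary.mem_iff.mp (hg j)).1
      simpa [Matrix.star_eq_conjTranspose] using h1
    rw [hgg]; rfl
  -- the contraction hypothesis at the level of `nsq`
  have hS : ∀ w : Fin k → ℂ, nsq (S *ᵥ w) ≤ nsq w := by
    intro w
    have h1 := hScontr ((WithLp.equiv 2 (Fin k → ℂ)).symm w)
    rw [WithLp.equiv_symm_apply, Matrix.toEuclideanLin_apply_piLp_toLp] at h1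
    have h2 := pow_le_pow_left₀ (norm_nonneg _) h1 2
    rw [euclid_norm_sq, euclid_norm_sq] at h2
    exact h2
  -- the key inequality
  have key : ∀ p : (Fin α × Fin k) → ℂ, nsq p ≤ nsq (chiM g S *ᵥ p) := by
    intro p
    have hTinv : (sT (Fin N) S - dT g) * (sT (Fin N) S - dT g)⁻¹ = 1 :=
      Matrix.mul_nonsing_inv _ ((Matrix.isUnit_iff_isUnit_det _).mp hinv)
    set h : (Fin N × Fin k) → ℂ := (sT (Fin N) S - dT g)⁻¹ *ᵥ (cT g *ᵥ p) with hhdef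
    have hTh : sT (Fin N) S *ᵥ h = cT g *ᵥ p + dT g *ᵥ h := by
      have h1 : (sT (Fin N) S - dT g) *ᵥ h = cT g *ᵥ p := by
        rw [hhdef, mulVec_mulVec, hTinv, one_mulVec]
      rw [sub_mulVec] at h1
      exact sub_eq_iff_eq_add.mp h1
    have hχp : chiM g S *ᵥ p = aT g *ᵥ p + bT g *ᵥ h := by
      rw [chiM, add_mulVec]
      congr 1
      conv_rhs => rw [hhdef, mulVec_mulVec, mulVec_mulVec]
    set x : ((Fin α ⊕ Fin N) × Fin k) → ℂ :=
      fun q => Sum.elim (fun a => p (a, q.2)) (fun i => h (i, q.2)) q.1 with hxdef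
    have hG : ∀ (u : Fin α ⊕ Fin N) (j : Fin k), (blockDiagonal g *ᵥ x) (u, j) =
        Sum.elim ((g j).toBlocks₁₁ *ᵥ (fun a => p (a, j)) + (g j).toBlocks₁₂ *ᵥ (fun i => h (i, j)))
          ((g j).toBlocks₂₁ *ᵥ (fun a => p (a, j)) + (g j).toBlocks₂₂ *ᵥ (fun i => h (i, j))) u := by
      intro u j
      rw [blockDiagonal_mulVec_apply]
      have hx : (fun y => x (y, j)) = Sum.elim (fun a => p (a, j)) (fun i => h (i, j)) := by
        funext y; cases y <;> rfl
      rw [hx, mulVec_sum_elim]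
    have htop : (fun q : Fin α × Fin k => (blockDiagonal g *ᵥ x) (Sum.inl q.1, q.2))
        = chiM g S *ᵥ p := by
      funext q
      rw [hχp, hG]
      show _ = (aT g *ᵥ p) (q.1, q.2) + (bT g *ᵥ h) (q.1, q.2)
      rw [aT, bT, blockDiagonal_mulVec_apply, blockDiagonal_mulVec_apply]
      rfl
    have hbot : (fun q : Fin N × Fin k => (blockDiagonal g *ᵥ x) (Sum.inr q.1, q.2))
        = sT (Fin N) S *ᵥ h := by
      funext q
      rw [hG]
      have : (sT (Fin N) S *ᵥ h) (q.1, q.2) = (cT g *ᵥ p) (q.1, q.2) + (dT g *ᵥ h) (q.1, q.2) := by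
        rw [hTh]; rfl
      rw [show (sT (Fin N) S *ᵥ h) q = (sT (Fin N) S *ᵥ h) (q.1, q.2) from rfl, this]
      rw [cT, dT, blockDiagonal_mulVec_apply, blockDiagonal_mulVec_apply]
      rfl
    have e1 : nsq x = nsq p + nsq h := by
      rw [nsq_sum_prod x]
      rfl
    have e2 : nsq (blockDiagonal g *ᵥ x)
        = nsq (chiM g S *ᵥ p) + nsq (sT (Fin N) S *ᵥ h) := by
      rw [nsq_sum_prod (blockDiagonal g *ᵥ x), htop, hbot]
    have e3 : nsq (blockDiagonal g *ᵥ x) = nsq x := nsq_mulVec_unitary hGu x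
    have e4 : nsq (sT (Fin N) S *ᵥ h) ≤ nsq h := by
      rw [nsq_prod (sT (Fin N) S *ᵥ h), nsq_prod h]
      apply Finset.sum_le_sum
      intro i _
      have hfun : (fun l => (sT (Fin N) S *ᵥ h) (i, l)) = S *ᵥ (fun l => h (i, l)) := by
        funext l; exact sT_mulVec_apply S h i l
      rw [hfun]
      exact hS _
    linarith
  -- invertibility
  have hU : IsUnit (chiM g S) := by
    rw [← Matrix.mulVec_injective_iff_isUnit]
    intro p q hpq
    have h0 : chiM g S *ᵥ (p - q) = 0 := by rw [mulVec_sub, hpq, sub_self]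
    have h1 := key (p - q)
    rw [h0] at h1
    have h2 : nsq (p - q) ≤ 0 := by simpa [nsq] using h1
    exact sub_eq_zero.mp (nsq_eq_zero h2)
  refine ⟨fun p => ?_, hU, fun q => ?_⟩
  · exact euclid_norm_le p (Matrix.toEuclideanLin (chiM g S) p) (key _)
  · set p : (Fin α × Fin k) → ℂ := (chiM g S)⁻¹ *ᵥ (WithLp.equiv 2 _ q) with hp
    have hq : chiM g S *ᵥ p = (WithLp.equiv 2 _) q := by
      rw [hp, mulVec_mulVec,
        Matrix.mul_nonsing_inv _ ((Matrix.isUnit_iff_isUnit_det _).mp hU), one_mulVec]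
    have h1 := key p
    rw [hq] at h1
    exact euclid_norm_le (Matrix.toEuclideanLin (chiM g S)⁻¹ q) q h1
end

section
/- Let α, N, k be natural numbers and let 𝔄 = (g_1,…,g_k) be a multiple colligation of size (α,N,k) in which every g_j is a unitary matrix. Let S be a k×k unitary matrix such that S̃ − d̃ is invertible. Then χ(𝔄; S) is a unitary (kα)×(kα) matrix, i.e. χ(𝔄; S)* · χ(𝔄; S) = 1. -/
open Matrix

open Kronecker in
lemma sT_eq_kron {k : ℕ} (I : Type*) [DecidableEq I] (S : Matrix (Fin k) (Fin k) ℂ) :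
    sT I S = (1 : Matrix I I ℂ) ⊗ₖ S := by
  ext ⟨i, p⟩ ⟨j, q⟩
  simp [sT, Matrix.one_apply, ite_mul]

lemma sT_conjTranspose {k : ℕ} (I : Type*) [DecidableEq I] (S : Matrix (Fin k) (Fin k) ℂ) :
    (sT I S)ᴴ = sT I Sᴴ := by
  ext ⟨i, p⟩ ⟨j, q⟩
  simp only [sT, conjTranspose_apply, of_apply]
  by_cases h : i = j
  · simp [h]
  · rw [if_neg (Ne.symm h), if_neg h, star_zero]

-- auxiliary: sTᴴ * sT = 1 when S is unitary
open Kronecker in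
lemma sT_unitary {k N : ℕ} (S : Matrix (Fin k) (Fin k) ℂ)
    (hS : S ∈ Matrix.unitaryGroup (Fin k) ℂ) :
    (sT (Fin N) S)ᴴ * sT (Fin N) S = 1 := by
  have h : Sᴴ * S = 1 := (Matrix.mem_unitaryGroup_iff').mp hS
  rw [sT_conjTranspose, sT_eq_kron, sT_eq_kron, ← Matrix.mul_kronecker_mul,
    one_mul, h, Matrix.one_kronecker_one]


set_option maxHeartbeats 1000000 in
/-- for a multiple colligation of unitary matrices and a unitary `S` with
`S̃ − d̃` invertible, the characteristic function `χ(𝔄; S)` is unitary. -/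
theorem chiM_unitary {α N k : ℕ}
    (g : Fin k → Matrix (Fin α ⊕ Fin N) (Fin α ⊕ Fin N) ℂ)
    (hg : ∀ j, g j ∈ Matrix.unitaryGroup (Fin α ⊕ Fin N) ℂ)
    (S : Matrix (Fin k) (Fin k) ℂ) (hS : S ∈ Matrix.unitaryGroup (Fin k) ℂ)
    (hinv : IsUnit (sT (Fin N) S - dT g)) :
    (chiM g S)ᴴ * chiM g S = 1 := by
  classical
  -- blockwise unitarity relations
  have hblk : ∀ j, ((g j).toBlocks₁₁)ᴴ * (g j).toBlocks₁₁ + ((g j).toBlocks₂₁)ᴴ * (g j).toBlocks₂₁ = 1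
      ∧ ((g j).toBlocks₁₁)ᴴ * (g j).toBlocks₁₂ + ((g j).toBlocks₂₁)ᴴ * (g j).toBlocks₂₂ = 0
      ∧ ((g j).toBlocks₁₂)ᴴ * (g j).toBlocks₁₂ + ((g j).toBlocks₂₂)ᴴ * (g j).toBlocks₂₂ = 1 := by
    intro j
    have h : (g j)ᴴ * g j = 1 := (Matrix.mem_unitaryGroup_iff').mp (hg j)
    rw [← fromBlocks_toBlocks (g j)] at h
    rw [fromBlocks_conjTranspose, fromBlocks_multiply, ← fromBlocks_one] at h
    refine ⟨?_, ?_, ?_⟩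
    · have := congrArg Matrix.toBlocks₁₁ h; simpa only [Matrix.toBlocks_fromBlocks₁₁] using this
    · have := congrArg Matrix.toBlocks₁₂ h; simpa only [Matrix.toBlocks_fromBlocks₁₂] using this
    · have := congrArg Matrix.toBlocks₂₂ h; simpa only [Matrix.toBlocks_fromBlocks₂₂] using this
  set A := aT g; set B := bT g; set C := cT g; set D := dT g
  have hAA : Aᴴ * A + Cᴴ * C = 1 := by
    simp only [A, C, aT, cT, blockDiagonal_conjTranspose, ← blockDiagonal_mul, ← blockDiagonal_add]
    rw [show (fun j => ((g j).toBlocks₁₁)ᴴ * (g j).toBlocks₁₁) + (fun j => ((g j).toBlocks₂₁)ᴴ * (g j).toBlocks₂₁) = fun _ => 1 from funext fun j => (hblk j).1]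
    exact blockDiagonal_one
  have hAB : Aᴴ * B + Cᴴ * D = 0 := by
    simp only [A, B, C, D, aT, bT, cT, dT, blockDiagonal_conjTranspose, ← blockDiagonal_mul, ← blockDiagonal_add]
    rw [show (fun j => ((g j).toBlocks₁₁)ᴴ * (g j).toBlocks₁₂) + (fun j => ((g j).toBlocks₂₁)ᴴ * (g j).toBlocks₂₂) = fun _ => 0 from funext fun j => (hblk j).2.1]
    exact blockDiagonal_zero
  have hBB : Bᴴ * B + Dᴴ * D = 1 := by
    simp only [B, D, bT, dT, blockDiagonal_conjTranspose, ← blockDiagonal_mul, ← blockDiagonal_add]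
    rw [show (fun j => ((g j).toBlocks₁₂)ᴴ * (g j).toBlocks₁₂) + (fun j => ((g j).toBlocks₂₂)ᴴ * (g j).toBlocks₂₂) = fun _ => 1 from funext fun j => (hblk j).2.2]
    exact blockDiagonal_one
  have hBA : Bᴴ * A + Dᴴ * C = 0 := by
    have := congrArg conjTranspose hAB
    simpa [conjTranspose_add, conjTranspose_mul] using this
  set St := sT (Fin N) S
  have hSt : Stᴴ * St = 1 := sT_unitary S hS
  set T := St - D with hT
  set E := T⁻¹ with hE
  have hdet : IsUnit T.det := (Matrix.isUnit_iff_isUnit_det T).mp hinv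
  have hTE : T * E = 1 := Matrix.mul_nonsing_inv T hdet
  have hET : E * T = 1 := Matrix.nonsing_inv_mul T hdet
  have hTEH : Eᴴ * Tᴴ = 1 := by
    have := congrArg conjTranspose hTE; simpa [conjTranspose_mul] using this
  have hETH : Tᴴ * Eᴴ = 1 := by
    have := congrArg conjTranspose hET; simpa [conjTranspose_mul] using this
  -- key identity
  have key : Eᴴ * (1 - Dᴴ * D) * E = 1 + D * E + Eᴴ * Dᴴ := by
    have hTD : T + D = St := by rw [hT]; abel
    have inner : Tᴴ * T + Tᴴ * D + Dᴴ * T + Dᴴ * D = 1 := by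
      have : (T + D)ᴴ * (T + D) = 1 := by rw [hTD]; exact hSt
      rw [conjTranspose_add] at this
      calc Tᴴ * T + Tᴴ * D + Dᴴ * T + Dᴴ * D = (Tᴴ + Dᴴ) * (T + D) := by noncomm_ring
        _ = 1 := this
    have h1 : (1 : Matrix (Fin N × Fin k) (Fin N × Fin k) ℂ) - Dᴴ * D
        = Tᴴ * T + Tᴴ * D + Dᴴ * T := by
      rw [← inner]; abel
    rw [h1]
    calc Eᴴ * (Tᴴ * T + Tᴴ * D + Dᴴ * T) * E
        = (Eᴴ * Tᴴ) * (T * E) + (Eᴴ * Tᴴ) * (D * E) + Eᴴ * Dᴴ * (T * E) := by noncomm_ring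
      _ = 1 + D * E + Eᴴ * Dᴴ := by rw [hTE, hTEH]; noncomm_ring
  -- final computation
  have hchi : chiM g S = A + B * E * C := rfl
  rw [hchi]
  have expand : (A + B * E * C)ᴴ * (A + B * E * C)
      = Aᴴ * A + (Aᴴ * B) * (E * C) + (Cᴴ * Eᴴ) * (Bᴴ * A) + Cᴴ * (Eᴴ * (Bᴴ * B) * E) * C := by
    simp only [conjTranspose_add, conjTranspose_mul, Matrix.mul_add, Matrix.add_mul,
      Matrix.mul_assoc]
    abel
  rw [expand]
  have e1 : Aᴴ * A = 1 - Cᴴ * C := by rw [← hAA]; abel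
  have e2 : Aᴴ * B = -(Cᴴ * D) := by
    have : Aᴴ * B = Aᴴ * B + Cᴴ * D - Cᴴ * D := by abel
    rw [this, hAB]; abel
  have e3 : Bᴴ * A = -(Dᴴ * C) := by
    have : Bᴴ * A = Bᴴ * A + Dᴴ * C - Dᴴ * C := by abel
    rw [this, hBA]; abel
  have e4 : Bᴴ * B = 1 - Dᴴ * D := by rw [← hBB]; abel
  rw [e1, e2, e3, e4, key]
  simp only [Matrix.mul_add, Matrix.add_mul, Matrix.sub_mul, Matrix.mul_sub, mul_one, one_mul,
    Matrix.neg_mul, Matrix.mul_neg, Matrix.mul_assoc, Matrix.one_mul, Matrix.mul_one]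
  abel
end

section
/- Let α, N, k be natural numbers, let 𝔄 = (g_1,…,g_k) be a multiple colligation of size (α,N,k), and let λ_1,…,λ_k be nonzero complex numbers. Let λ denote the diagonal k×k matrix with entries λ_j, let S be a k×k matrix such that S̃ − d̃ is invertible, and let S' = λ·S·λ⁻¹. Then S̃' − d̃ is invertible and χ(𝔄; λ·S·λ⁻¹) = Λ · χ(𝔄; S) · Λ⁻¹, where Λ is the (kα)×(kα) block-diagonal matrix whose j-th diagonal block is λ_j·1_α. -/
open Matrix

section aux

variable {k : ℕ} (lam : Fin k → ℂ)

/-- A diagonal matrix whose entry depends only on the second coordinate commutes with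
block diagonal matrices. -/
lemma diag_comm_blockDiagonal {I : Type*} [Fintype I] [DecidableEq I] [DecidableEq (Fin k)]
    (M : Fin k → Matrix I I ℂ) :
    diagonal (fun p : I × Fin k => lam p.2) * blockDiagonal M
      = blockDiagonal M * diagonal (fun p : I × Fin k => lam p.2) := by
  ext ⟨i, j⟩ ⟨i', j'⟩
  rcases eq_or_ne j j' with h | h
  · subst h
    simp [diagonal_mul, mul_diagonal, blockDiagonal_apply, mul_comm]
  · simp [diagonal_mul, mul_diagonal, blockDiagonal_apply, h]

lemma diag_swap_blockDiagonal {I J : Type*} [Fintype I] [Fintype J] [DecidableEq I] [DecidableEq J]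
    [DecidableEq (Fin k)] (M : Fin k → Matrix I J ℂ) :
    diagonal (fun p : I × Fin k => lam p.2) * blockDiagonal M
      = blockDiagonal M * diagonal (fun p : J × Fin k => lam p.2) := by
  ext ⟨i, j⟩ ⟨i', j'⟩
  rcases eq_or_ne j j' with h | h
  · subst h
    simp [diagonal_mul, mul_diagonal, blockDiagonal_apply, mul_comm]
  · simp [diagonal_mul, mul_diagonal, blockDiagonal_apply, h]

end aux

/-- equivariance of the multivariate characteristic function under
conjugation by diagonal matrices: `χ(𝔄; λ·S·λ⁻¹) = Λ·χ(𝔄; S)·Λ⁻¹`, where `Λ` is the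
block-diagonal matrix with blocks `λ_j · 1_α`. -/
theorem chiM_diag_conj {α N k : ℕ}
    (g : Fin k → Matrix (Fin α ⊕ Fin N) (Fin α ⊕ Fin N) ℂ)
    (lam : Fin k → ℂ) (hlam : ∀ j, lam j ≠ 0)
    (S : Matrix (Fin k) (Fin k) ℂ)
    (hS : IsUnit (sT (Fin N) S - dT g)) :
    IsUnit (sT (Fin N) (diagonal lam * S * (diagonal lam)⁻¹) - dT g) ∧
      chiM g (diagonal lam * S * (diagonal lam)⁻¹)
        = diagonal (fun p : Fin α × Fin k => lam p.2) * chiM g S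
            * (diagonal fun p : Fin α × Fin k => lam p.2)⁻¹ := by
  classical
  set f : Fin N × Fin k → ℂ := fun p => lam p.2 with hf
  set fi : Fin N × Fin k → ℂ := fun p => (lam p.2)⁻¹ with hfi
  set D : Matrix (Fin N × Fin k) (Fin N × Fin k) ℂ := diagonal f with hD
  set Di : Matrix (Fin N × Fin k) (Fin N × Fin k) ℂ := diagonal fi with hDi
  have hDDi : D * Di = 1 := by
    have h1 : (fun p => f p * fi p) = fun _ : Fin N × Fin k => (1 : ℂ) :=
      funext fun p => mul_inv_cancel₀ (hlam p.2)
    rw [hD, hDi, diagonal_mul_diagonal, h1, diagonal_one]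
  have hDiD : Di * D = 1 := by
    have h1 : (fun p => fi p * f p) = fun _ : Fin N × Fin k => (1 : ℂ) :=
      funext fun p => inv_mul_cancel₀ (hlam p.2)
    rw [hD, hDi, diagonal_mul_diagonal, h1, diagonal_one]
  have hDinv : D⁻¹ = Di := inv_eq_right_inv hDDi
  have hDiinv : Di⁻¹ = D := inv_eq_right_inv hDiD
  have hDunit : IsUnit D := ⟨⟨D, Di, hDDi, hDiD⟩, rfl⟩
  have hDiunit : IsUnit Di := ⟨⟨Di, D, hDiD, hDDi⟩, rfl⟩
  have hlaminv : (diagonal lam)⁻¹ = diagonal (fun j => (lam j)⁻¹) := by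
    apply inv_eq_right_inv
    have h1 : (fun j => lam j * (lam j)⁻¹) = fun _ : Fin k => (1 : ℂ) :=
      funext fun j => mul_inv_cancel₀ (hlam j)
    rw [diagonal_mul_diagonal, h1, diagonal_one]
  -- transformation of sT
  have hsT : sT (Fin N) (diagonal lam * S * (diagonal lam)⁻¹)
      = D * sT (Fin N) S * Di := by
    ext ⟨i, j⟩ ⟨i', j'⟩
    rcases eq_or_ne i i' with h | h
    · simp [sT, hD, hDi, hf, hfi, hlaminv, diagonal_mul, mul_diagonal, h,
        mul_assoc]
    · simp [sT, hD, hDi, hlaminv, diagonal_mul, mul_diagonal, h]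
  -- commutation with dT
  have hdcom : D * dT g = dT g * D := diag_comm_blockDiagonal lam _
  -- key conjugation identity
  have hX : sT (Fin N) (diagonal lam * S * (diagonal lam)⁻¹) - dT g
      = D * (sT (Fin N) S - dT g) * Di := by
    have : D * dT g * Di = dT g := by
      rw [hdcom, mul_assoc, hDDi, mul_one]
    rw [mul_sub, sub_mul, this, hsT]
  have hUnit : IsUnit (sT (Fin N) (diagonal lam * S * (diagonal lam)⁻¹) - dT g) := by
    rw [hX]
    exact (hDunit.mul hS).mul hDiunit
  refine ⟨hUnit, ?_⟩
  -- inverse of the conjugated matrix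
  have hinv : (sT (Fin N) (diagonal lam * S * (diagonal lam)⁻¹) - dT g)⁻¹
      = D * (sT (Fin N) S - dT g)⁻¹ * Di := by
    rw [hX, Matrix.mul_inv_rev, Matrix.mul_inv_rev, hDinv, hDiinv, mul_assoc]
  set L : Matrix (Fin α × Fin k) (Fin α × Fin k) ℂ :=
    diagonal (fun p : Fin α × Fin k => lam p.2) with hL
  set Li : Matrix (Fin α × Fin k) (Fin α × Fin k) ℂ :=
    diagonal (fun p : Fin α × Fin k => (lam p.2)⁻¹) with hLi
  have hLLi : L * Li = 1 := by
    have h1 : (fun p : Fin α × Fin k => lam p.2 * (lam p.2)⁻¹)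
        = fun _ : Fin α × Fin k => (1 : ℂ) :=
      funext fun p => mul_inv_cancel₀ (hlam p.2)
    rw [hL, hLi, diagonal_mul_diagonal, h1, diagonal_one]
  have hLinv : L⁻¹ = Li := inv_eq_right_inv hLLi
  -- commutation facts
  have hacom : L * aT g = aT g * L := diag_comm_blockDiagonal lam _
  have hbcom : L * bT g = bT g * D := diag_swap_blockDiagonal lam _
  have hDic : Di * cT g = cT g * Li :=
    diag_swap_blockDiagonal (fun j => (lam j)⁻¹) _
  have haL : L * aT g * Li = aT g := by
    rw [hacom, mul_assoc, hLLi, mul_one]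
  -- final computation
  have key : bT g * (D * (sT (Fin N) S - dT g)⁻¹ * Di) * cT g
      = L * (bT g * (sT (Fin N) S - dT g)⁻¹ * cT g) * Li := by
    calc bT g * (D * (sT (Fin N) S - dT g)⁻¹ * Di) * cT g
        = (bT g * D) * (sT (Fin N) S - dT g)⁻¹ * (Di * cT g) := by
          simp only [Matrix.mul_assoc]
      _ = (L * bT g) * (sT (Fin N) S - dT g)⁻¹ * (cT g * Li) := by
          rw [hbcom, hDic]
      _ = L * (bT g * (sT (Fin N) S - dT g)⁻¹ * cT g) * Li := by
          simp only [Matrix.mul_assoc]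
  rw [chiM, chiM, hinv, hLinv, Matrix.mul_add, Matrix.add_mul, haL, key]
end

section
/- Let α, N, M, k be natural numbers, let 𝔄 = (g_1,…,g_k) be a multiple colligation of size (α,N,k) and 𝔓 = (h_1,…,h_k) a multiple colligation of size (α,M,k), and let 𝔄∘𝔓 be the multiple colligation of size (α,N+M,k) whose j-th matrix is g_j∘h_j. Let L be a ℂ-linear subspace of ℂ^k × ℂ^k. Then the linear relations satisfy X(𝔄∘𝔓; L) ⊇ X(𝔄; L) ∘ X(𝔓; L); explicitly, if r, p, q : Fin k → ℂ^α are such that (r, p) ∈ X(𝔓; L) and (p, q) ∈ X(𝔄; L), then (r, q) ∈ X(𝔄∘𝔓; L). -/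
open Matrix

/-- The linear relation `X(𝔄; L)` associated to a multiple colligation `𝔄` and a subspace
`L ⊆ ℂ^k × ℂ^k`: `(p, q) ∈ X(𝔄; L)` iff there exist `x`, `y` with
`q_j = a_j p_j + b_j x_j`, `y_j = c_j p_j + d_j x_j`, and for each coordinate `t` the pair
`((x_j(t))_j, (y_j(t))_j)` belongs to `L`. -/
def XRel {k α : ℕ} {I : Type*} [Fintype I]
    (g : Fin k → Matrix (Fin α ⊕ I) (Fin α ⊕ I) ℂ)
    (L : Submodule ℂ ((Fin k → ℂ) × (Fin k → ℂ)))
    (p q : Fin k → Fin α → ℂ) : Prop :=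
  ∃ x y : Fin k → I → ℂ,
    (∀ j, q j = (g j).toBlocks₁₁.mulVec (p j) + (g j).toBlocks₁₂.mulVec (x j)) ∧
    (∀ j, y j = (g j).toBlocks₂₁.mulVec (p j) + (g j).toBlocks₂₂.mulVec (x j)) ∧
    ∀ t : I, ((fun j => x j t, fun j => y j t) : (Fin k → ℂ) × (Fin k → ℂ)) ∈ L

/-- the linear relation of the product of multiple colligations contains the
product of the linear relations: `X(𝔄∘𝔓; L) ⊇ X(𝔄; L) ∘ X(𝔓; L)`. -/
theorem XRel_colProd {α N M k : ℕ}
    (g : Fin k → Matrix (Fin α ⊕ Fin N) (Fin α ⊕ Fin N) ℂ)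
    (h : Fin k → Matrix (Fin α ⊕ Fin M) (Fin α ⊕ Fin M) ℂ)
    (L : Submodule ℂ ((Fin k → ℂ) × (Fin k → ℂ)))
    (r p q : Fin k → Fin α → ℂ)
    (hrp : XRel h L r p) (hpq : XRel g L p q) :
    XRel (fun j => colProd (g j) (h j)) L r q := by
  obtain ⟨xh, yh, hp, hyh, hLh⟩ := hrp
  obtain ⟨xg, yg, hq, hyg, hLg⟩ := hpq
  refine ⟨fun j => Sum.elim (xg j) (xh j), fun j => Sum.elim (yg j) (yh j), ?_, ?_, ?_⟩
  · intro j
    simp only [colProd, toBlocks_fromBlocks₁₁, toBlocks_fromBlocks₁₂,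
      fromCols_mulVec_sumElim, ← mulVec_mulVec, hq j, hp j, mulVec_add]
    abel
  · intro j
    funext i
    simp only [colProd, toBlocks_fromBlocks₂₁, toBlocks_fromBlocks₂₂]
    cases i with
    | inl t =>
      have := congrFun (hyg j) t
      simp only [this, hp j, Pi.add_apply, fromRows_mulVec, fromBlocks_mulVec,
        Sum.elim_inl, ← mulVec_mulVec, mulVec_add, Matrix.add_apply, zero_mulVec, Pi.zero_apply]
      simp only [Sum.elim_comp_inl, Sum.elim_comp_inr]
      ring
    | inr t =>
      have := congrFun (hyh j) t
      simp [this, fromRows_mulVec, fromBlocks_mulVec, mulVec_add]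
  · intro t
    cases t with
    | inl t => simpa using hLg t
    | inr t => simpa using hLh t
end

section
/- Let α, N, k be natural numbers and let 𝔄 = (g_1,…,g_k) be a multiple colligation of size (α,N,k) in which every g_j is a unitary matrix. Let L be a ℂ-linear subspace of ℂ^k × ℂ^k on which the Hermitian form M(v⊕w) = Σ_{i=1}^k |v_i|² − Σ_{i=1}^k |w_i|² is positive definite (M(v⊕w) > 0 for every nonzero (v,w) ∈ L). Then the Hermitian form 𝓜(p⊕q) = Σ_{j=1}^k ‖p_j‖² − Σ_{j=1}^k ‖q_j‖² is negative semidefinite on the linear relation X(𝔄; L): for every (p, q) ∈ X(𝔄; L), Σ_{j=1}^k ‖p_j‖² ≤ Σ_{j=1}^k ‖q_j‖² (Euclidean norms on ℂ^α). -/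
open Matrix

lemma norm_sum_unitary_aux {n : Type*} [Fintype n] [DecidableEq n]
    (A : Matrix n n ℂ) (hA : A ∈ Matrix.unitaryGroup n ℂ) (v : n → ℂ) :
    ∑ i, ‖A.mulVec v i‖ ^ 2 = ∑ i, ‖v i‖ ^ 2 := by
  have key : star (A.mulVec v) ⬝ᵥ (A.mulVec v) = star v ⬝ᵥ v := by
    rw [Matrix.star_mulVec, Matrix.dotProduct_mulVec, Matrix.vecMul_vecMul,
      ← Matrix.star_eq_conjTranspose, hA.1, Matrix.vecMul_one]
  have h1 : ∀ (w : n → ℂ), star w ⬝ᵥ w = ((∑ i, ‖w i‖ ^ 2 : ℝ) : ℂ) := by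
    intro w
    simp only [dotProduct, Pi.star_apply, Complex.star_def]
    push_cast
    congr 1
    ext i
    rw [← Complex.normSq_eq_conj_mul_self, Complex.normSq_eq_norm_sq]
    norm_cast
  have := key
  rw [h1, h1] at this
  exact_mod_cast this

/-- if the form `Σ|v_i|² − Σ|w_i|²` is positive definite on `L` and all the
matrices of the multiple colligation are unitary, then the form `Σ‖p_j‖² − Σ‖q_j‖²` is
negative semidefinite on the linear relation `X(𝔄; L)`. -/
theorem XRel_negSemidef {α N k : ℕ}
    (g : Fin k → Matrix (Fin α ⊕ Fin N) (Fin α ⊕ Fin N) ℂ)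
    (hg : ∀ j, g j ∈ Matrix.unitaryGroup (Fin α ⊕ Fin N) ℂ)
    (L : Submodule ℂ ((Fin k → ℂ) × (Fin k → ℂ)))
    (hL : ∀ vw ∈ L, vw ≠ 0 → 0 < ∑ i, ‖vw.1 i‖ ^ 2 - ∑ i, ‖vw.2 i‖ ^ 2)
    (p q : Fin k → Fin α → ℂ) (hpq : XRel g L p q) :
    ∑ j, ∑ s, ‖p j s‖ ^ 2 ≤ ∑ j, ∑ s, ‖q j s‖ ^ 2 := by
  obtain ⟨x, y, hq, hy, hmem⟩ := hpq
  set v : Fin k → (Fin α ⊕ Fin N) → ℂ := fun j => Sum.elim (p j) (x j) with hv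
  have hgv : ∀ j, (g j).mulVec (v j) = Sum.elim (q j) (y j) := by
    intro j
    conv_lhs => rw [← Matrix.fromBlocks_toBlocks (g j)]
    rw [hv]
    simp only [Matrix.fromBlocks_mulVec, hq j, hy j, Sum.elim_comp_inl, Sum.elim_comp_inr]
  have hE : ∀ j, ∑ s, ‖p j s‖ ^ 2 + ∑ t, ‖x j t‖ ^ 2
      = ∑ s, ‖q j s‖ ^ 2 + ∑ t, ‖y j t‖ ^ 2 := by
    intro j
    have := norm_sum_unitary_aux (g j) (hg j) (v j)
    rw [hgv j] at this
    rw [Fintype.sum_sum_type, Fintype.sum_sum_type] at this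
    simpa [hv] using this.symm
  have hT : ∀ t : Fin N, ∑ j, ‖y j t‖ ^ 2 ≤ ∑ j, ‖x j t‖ ^ 2 := by
    intro t
    by_cases h0 : ((fun j => x j t, fun j => y j t) : (Fin k → ℂ) × (Fin k → ℂ)) = 0
    · have hx0 : (fun j => x j t) = 0 := congrArg Prod.fst h0
      have hy0 : (fun j => y j t) = 0 := congrArg Prod.snd h0
      simp [funext_iff] at hx0 hy0
      simp [hx0, hy0]
    · have := hL _ (hmem t) h0
      simp only at this
      linarith
  have hsum : ∑ j, ∑ t, ‖y j t‖ ^ 2 ≤ ∑ j, ∑ t, ‖x j t‖ ^ 2 := by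
    rw [Finset.sum_comm, Finset.sum_comm (γ := Fin k)]
    exact Finset.sum_le_sum fun t _ => hT t
  have hEsum : ∑ j, ∑ s, ‖p j s‖ ^ 2 + ∑ j, ∑ t, ‖x j t‖ ^ 2
      = ∑ j, ∑ s, ‖q j s‖ ^ 2 + ∑ j, ∑ t, ‖y j t‖ ^ 2 := by
    rw [← Finset.sum_add_distrib, ← Finset.sum_add_distrib]
    exact Finset.sum_congr rfl fun j _ => hE j
  linarith
end

section
/- Let α, p, q be natural numbers. Let g be an (α+2p)×(α+2p) complex matrix blocked (with rows and columns indexed by the decomposition α, p, p) as g = [[a,b_1,b_2],[c_1,d_{11},d_{12}],[c_2,d_{21},d_{22}]], and let h = [[a',b'_1,b'_2],[c'_1,d'_{11},d'_{12}],[c'_2,d'_{21},d'_{22}]] be an (α+2q)×(α+2q) matrix blocked analogously with blocks of sizes built from α and q. Define g∘h as the (α+2(p+q))×(α+2(p+q)) matrix, with rows and columns indexed by the decomposition α, p, q, p, q, given by the product [[a,b_1,0,b_2,0],[c_1,d_{11},0,d_{12},0],[0,0,1,0,0],[c_2,d_{21},0,d_{22},0],[0,0,0,0,1]] · [[a',0,b'_1,0,b'_2],[0,1,0,0,0],[c'_1,0,d'_{11},0,d'_{12}],[0,0,0,1,0],[c'_2,0,d'_{21},0,d'_{22}]].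 Let S be a 2×2 complex matrix such that the matrices S̃_p − D_g and S̃_q − D_h are invertible, where for a size r, S̃_r is the 2r×2r block matrix with (i,j) block s_{ij}·1_r, and D_g = [[d_{11},d_{12}],[d_{21},d_{22}]], D_h = [[d'_{11},d'_{12}],[d'_{21},d'_{22}]]. Then S̃_{p+q} − D_{g∘h} is invertible (D_{g∘h} being the lower-right 2(p+q)×2(p+q) block of g∘h in the indexing (p,q,p,q)) and χ(g∘h; S) = χ(g; S) · χ(h; S). -/
open Matrix

/-- `S̃_I`: for a `2 × 2` matrix `S`, the block matrix on `I ⊕ I` with `(i,j)` block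
`s_{ij} · 1`. -/
noncomputable def sT2 (I : Type*) [DecidableEq I] (S : Matrix (Fin 2) (Fin 2) ℂ) :
    Matrix (I ⊕ I) (I ⊕ I) ℂ :=
  fromBlocks (S 0 0 • 1) (S 0 1 • 1) (S 1 0 • 1) (S 1 1 • 1)

/-- The characteristic function on `2 × 2` matrices of a colligation
`g = [[a,b₁,b₂],[c₁,d₁₁,d₁₂],[c₂,d₂₁,d₂₂]]` (blocked over `A ⊕ (I ⊕ I)`):
`χ(g; S) = a + B·(S̃ − D)⁻¹·C` where `B = [b₁ b₂]`, `C = [c₁; c₂]`,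
`D = [[d₁₁,d₁₂],[d₂₁,d₂₂]]`. -/
noncomputable def chi2 {A I : Type*} [Fintype A] [Fintype I] [DecidableEq I]
    (g : Matrix (A ⊕ (I ⊕ I)) (A ⊕ (I ⊕ I)) ℂ) (S : Matrix (Fin 2) (Fin 2) ℂ) :
    Matrix A A ℂ :=
  g.toBlocks₁₁ + g.toBlocks₁₂ * (sT2 I S - g.toBlocks₂₂)⁻¹ * g.toBlocks₂₁

/-- The product `g∘h` of colligations of sizes `(A, P ⊕ P)` and `(A, Q ⊕ Q)`, given as the
product of the two matrices
`[[a,b₁,0,b₂,0],[c₁,d₁₁,0,d₁₂,0],[0,0,1,0,0],[c₂,d₂₁,0,d₂₂,0],[0,0,0,0,1]]` and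
`[[a',0,b₁',0,b₂'],[0,1,0,0,0],[c₁',0,d₁₁',0,d₁₂'],[0,0,0,1,0],[c₂',0,d₂₁',0,d₂₂']]`,
with rows and columns indexed by `A ⊕ ((P ⊕ Q) ⊕ (P ⊕ Q))`. -/
noncomputable def prod2 {A P Q : Type*} [Fintype A] [Fintype P] [Fintype Q]
    [DecidableEq P] [DecidableEq Q]
    (g : Matrix (A ⊕ (P ⊕ P)) (A ⊕ (P ⊕ P)) ℂ)
    (h : Matrix (A ⊕ (Q ⊕ Q)) (A ⊕ (Q ⊕ Q)) ℂ) :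
    Matrix (A ⊕ ((P ⊕ Q) ⊕ (P ⊕ Q))) (A ⊕ ((P ⊕ Q) ⊕ (P ⊕ Q))) ℂ :=
  (fromBlocks g.toBlocks₁₁
      (fromCols (fromCols (g.toBlocks₁₂.submatrix id Sum.inl) 0)
        (fromCols (g.toBlocks₁₂.submatrix id Sum.inr) 0))
      (fromRows (fromRows (g.toBlocks₂₁.submatrix Sum.inl id) 0)
        (fromRows (g.toBlocks₂₁.submatrix Sum.inr id) 0))
      (fromBlocks (fromBlocks g.toBlocks₂₂.toBlocks₁₁ 0 0 1)
        (fromBlocks g.toBlocks₂₂.toBlocks₁₂ 0 0 0)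
        (fromBlocks g.toBlocks₂₂.toBlocks₂₁ 0 0 0)
        (fromBlocks g.toBlocks₂₂.toBlocks₂₂ 0 0 1))) *
  (fromBlocks h.toBlocks₁₁
      (fromCols (fromCols 0 (h.toBlocks₁₂.submatrix id Sum.inl))
        (fromCols 0 (h.toBlocks₁₂.submatrix id Sum.inr)))
      (fromRows (fromRows 0 (h.toBlocks₂₁.submatrix Sum.inl id))
        (fromRows 0 (h.toBlocks₂₁.submatrix Sum.inr id)))
      (fromBlocks (fromBlocks 1 0 0 h.toBlocks₂₂.toBlocks₁₁)
        (fromBlocks 0 0 0 h.toBlocks₂₂.toBlocks₁₂)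
        (fromBlocks 0 0 0 h.toBlocks₂₂.toBlocks₂₁)
        (fromBlocks 1 0 0 h.toBlocks₂₂.toBlocks₂₂)))


def myEE (P Q : Type*) : ((P ⊕ Q) ⊕ (P ⊕ Q)) ≃ ((P ⊕ P) ⊕ (Q ⊕ Q)) where
  toFun x := match x with
    | .inl (.inl p) => .inl (.inl p)
    | .inl (.inr q) => .inr (.inl q)
    | .inr (.inl p) => .inl (.inr p)
    | .inr (.inr q) => .inr (.inr q)
  invFun x := match x with
    | .inl (.inl p) => .inl (.inl p)
    | .inl (.inr p) => .inr (.inl p)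
    | .inr (.inl q) => .inl (.inr q)
    | .inr (.inr q) => .inr (.inr q)
  left_inv := by rintro ((_|_)|(_|_)) <;> rfl
  right_inv := by rintro ((_|_)|(_|_)) <;> rfl

lemma sT2_sum_eq (P Q : Type*) [DecidableEq P] [DecidableEq Q] (S : Matrix (Fin 2) (Fin 2) ℂ) :
    sT2 (P ⊕ Q) S = (fromBlocks (sT2 P S) 0 0 (sT2 Q S)).submatrix (myEE P Q) (myEE P Q) := by
  ext i j
  rcases i with (i|i)|(i|i) <;> rcases j with (j|j)|(j|j) <;>
    simp [sT2, myEE, one_apply]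

lemma prod2_eq {A P Q : Type*} [Fintype A] [Fintype P] [Fintype Q]
    [DecidableEq P] [DecidableEq Q]
    (g : Matrix (A ⊕ (P ⊕ P)) (A ⊕ (P ⊕ P)) ℂ)
    (h : Matrix (A ⊕ (Q ⊕ Q)) (A ⊕ (Q ⊕ Q)) ℂ) :
    prod2 g h = fromBlocks (g.toBlocks₁₁ * h.toBlocks₁₁)
      ((fromCols g.toBlocks₁₂ (g.toBlocks₁₁ * h.toBlocks₁₂)).submatrix id (myEE P Q))
      ((fromRows (g.toBlocks₂₁ * h.toBlocks₁₁) h.toBlocks₂₁).submatrix (myEE P Q) id)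
      ((fromBlocks g.toBlocks₂₂ (g.toBlocks₂₁ * h.toBlocks₁₂) 0 h.toBlocks₂₂).submatrix
        (myEE P Q) (myEE P Q)) := by
  ext i j
  rcases i with i | (i|i)|(i|i) <;> rcases j with j | (j|j)|(j|j) <;>
    simp [prod2, myEE, mul_apply, Fintype.sum_sum_type, one_apply, toBlocks₁₁, toBlocks₁₂,
      toBlocks₂₁, toBlocks₂₂, Finset.sum_ite_eq, Finset.sum_ite_eq']

/-- multiplicativity of the characteristic function for colligations of the
form `(α, p, p)`: `χ(g∘h; S) = χ(g; S)·χ(h; S)` whenever `S̃_p − D_g` and `S̃_q − D_h`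
are invertible, in which case `S̃_{p+q} − D_{g∘h}` is also invertible. -/
theorem chi2_mul {α p q : ℕ}
    (g : Matrix (Fin α ⊕ (Fin p ⊕ Fin p)) (Fin α ⊕ (Fin p ⊕ Fin p)) ℂ)
    (h : Matrix (Fin α ⊕ (Fin q ⊕ Fin q)) (Fin α ⊕ (Fin q ⊕ Fin q)) ℂ)
    (S : Matrix (Fin 2) (Fin 2) ℂ)
    (hg : IsUnit (sT2 (Fin p) S - g.toBlocks₂₂))
    (hh : IsUnit (sT2 (Fin q) S - h.toBlocks₂₂)) :
    IsUnit (sT2 (Fin p ⊕ Fin q) S - (prod2 g h).toBlocks₂₂) ∧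
      chi2 (prod2 g h) S = chi2 g S * chi2 h S := by
  
  set X := sT2 (Fin p) S - g.toBlocks₂₂ with hX
  set Y := sT2 (Fin q) S - h.toBlocks₂₂ with hY
  set e := myEE (Fin p) (Fin q) with he
  set M := g.toBlocks₂₁ * h.toBlocks₁₂ with hM
  have key : sT2 (Fin p ⊕ Fin q) S - (prod2 g h).toBlocks₂₂ =
      (fromBlocks X (-M) 0 Y).submatrix e e := by
    rw [sT2_sum_eq, prod2_eq, toBlocks_fromBlocks₂₂]
    rw [show ((fromBlocks (sT2 (Fin p) S) 0 0 (sT2 (Fin q) S)).submatrix e e -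
        (fromBlocks g.toBlocks₂₂ (g.toBlocks₂₁ * h.toBlocks₁₂) 0 h.toBlocks₂₂).submatrix e e) =
        ((fromBlocks (sT2 (Fin p) S) 0 0 (sT2 (Fin q) S) -
          fromBlocks g.toBlocks₂₂ (g.toBlocks₂₁ * h.toBlocks₁₂) 0 h.toBlocks₂₂).submatrix e e)
      from rfl]
    rw [sub_eq_add_neg, fromBlocks_neg, fromBlocks_add]
    simp [hX, hY, hM, sub_eq_add_neg]
  have hunit : IsUnit (sT2 (Fin p ⊕ Fin q) S - (prod2 g h).toBlocks₂₂) := by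
    rw [key, isUnit_iff_isUnit_det, det_submatrix_equiv_self, det_fromBlocks_zero₂₁]
    exact ((isUnit_iff_isUnit_det _).mp hg).mul ((isUnit_iff_isUnit_det _).mp hh)
  refine ⟨hunit, ?_⟩
  obtain ⟨iX⟩ := hg.nonempty_invertible
  obtain ⟨iY⟩ := hh.nonempty_invertible
  letI := iX; letI := iY
  letI := fromBlocksZero₂₁Invertible X (-M) Y
  have hinv : (sT2 (Fin p ⊕ Fin q) S - (prod2 g h).toBlocks₂₂)⁻¹ =
      (fromBlocks X⁻¹ (X⁻¹ * M * Y⁻¹) 0 Y⁻¹).submatrix e e := by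
    rw [key, inv_submatrix_equiv]
    rw [← invOf_eq_nonsing_inv, invOf_fromBlocks_zero₂₁_eq]
    rw [invOf_eq_nonsing_inv, invOf_eq_nonsing_inv]
    simp [Matrix.mul_neg, Matrix.neg_mul]
  rw [chi2, hinv, prod2_eq]
  simp only [toBlocks_fromBlocks₁₁, toBlocks_fromBlocks₁₂, toBlocks_fromBlocks₂₁]
  rw [show ((fromCols g.toBlocks₁₂ (g.toBlocks₁₁ * h.toBlocks₁₂)).submatrix id e) *
      ((fromBlocks X⁻¹ (X⁻¹ * M * Y⁻¹) 0 Y⁻¹).submatrix e e) =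
      ((fromCols g.toBlocks₁₂ (g.toBlocks₁₁ * h.toBlocks₁₂)) *
        (fromBlocks X⁻¹ (X⁻¹ * M * Y⁻¹) 0 Y⁻¹)).submatrix id e from
    submatrix_mul_equiv _ _ _ _ _]
  rw [show (((fromCols g.toBlocks₁₂ (g.toBlocks₁₁ * h.toBlocks₁₂)) *
        (fromBlocks X⁻¹ (X⁻¹ * M * Y⁻¹) 0 Y⁻¹)).submatrix id e) *
      ((fromRows (g.toBlocks₂₁ * h.toBlocks₁₁) h.toBlocks₂₁).submatrix e id) =
      ((fromCols g.toBlocks₁₂ (g.toBlocks₁₁ * h.toBlocks₁₂)) *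
        (fromBlocks X⁻¹ (X⁻¹ * M * Y⁻¹) 0 Y⁻¹) *
        (fromRows (g.toBlocks₂₁ * h.toBlocks₁₁) h.toBlocks₂₁)).submatrix id id from
    submatrix_mul_equiv _ _ _ _ _]
  rw [submatrix_id_id, fromCols_mul_fromBlocks, fromCols_mul_fromRows]
  rw [chi2, chi2, ← hX, ← hY, hM]
  simp only [Matrix.mul_zero, add_zero, Matrix.add_mul, Matrix.mul_add, Matrix.mul_assoc]
  abel
end

section
/- Let α, N, k be natural numbers and let 𝔄 = (g_1,…,g_k) be a family of unitary (α+N)×(α+N) complex matrices. Let S, R be unitary k×k matrices such that E(𝔄; S, R) is invertible. Then χ(𝔄; S, R) belongs to the pseudo-unitary group U(kα, kα): with J the (2kα)×(2kα) block-diagonal matrix J = diag(1_{kα}, −1_{kα}), one has χ(𝔄; S, R)* · J · χ(𝔄; S, R) = J. Equivalently, for all p⁺, p⁻ and q⁺, q⁻ with (q⁺,q⁻) = χ(𝔄;S,R)·(p⁺,p⁻), one has ‖q⁺‖² − ‖q⁻‖² = ‖p⁺‖² − ‖p⁻‖². -/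
open Matrix

/-- The family of inverse-transpose matrices `g_j' = (g_jᵗ)⁻¹`. -/
noncomputable def gP {k : ℕ} {A I : Type*} [Fintype A] [Fintype I]
    [DecidableEq A] [DecidableEq I]
    (g : Fin k → Matrix (A ⊕ I) (A ⊕ I) ℂ) : Fin k → Matrix (A ⊕ I) (A ⊕ I) ℂ :=
  fun j => ((g j)ᵀ)⁻¹

/-- `E(𝔄; S, R) = d̃ − S̃·d̃'·R̃`, where `d̃'` is the block-diagonal matrix of the
`d`-blocks of the inverse transposes `(g_jᵗ)⁻¹`. -/
noncomputable def EMat {k : ℕ} {A I : Type*} [Fintype A] [Fintype I]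
    [DecidableEq A] [DecidableEq I]
    (g : Fin k → Matrix (A ⊕ I) (A ⊕ I) ℂ) (S R : Matrix (Fin k) (Fin k) ℂ) :
    Matrix (I × Fin k) (I × Fin k) ℂ :=
  dT g - sT I S * dT (gP g) * sT I R

/-- The two-variable characteristic function `χ(𝔄; S, R)`, a `2 × 2` block matrix with
blocks of size `kα`:
`[[ã − b̃·E⁻¹·c̃, b̃·E⁻¹·S̃·c̃'], [−b̃'·R̃·E⁻¹·c̃, ã' + b̃'·R̃·E⁻¹·S̃·c̃']]`. -/
noncomputable def chi2v {k : ℕ} {A I : Type*} [Fintype A] [Fintype I]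
    [DecidableEq A] [DecidableEq I]
    (g : Fin k → Matrix (A ⊕ I) (A ⊕ I) ℂ) (S R : Matrix (Fin k) (Fin k) ℂ) :
    Matrix ((A × Fin k) ⊕ (A × Fin k)) ((A × Fin k) ⊕ (A × Fin k)) ℂ :=
  fromBlocks
    (aT g - bT g * (EMat g S R)⁻¹ * cT g)
    (bT g * (EMat g S R)⁻¹ * sT I S * cT (gP g))
    (-(bT (gP g) * sT I R * (EMat g S R)⁻¹ * cT g))
    (aT (gP g) + bT (gP g) * sT I R * (EMat g S R)⁻¹ * sT I S * cT (gP g))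

namespace Chi2vAux

open Matrix

lemma dd {m n p : Type*} [Fintype m] [Fintype n] [Fintype p]
    (M : Matrix m n ℂ) (N : Matrix m p ℂ) (u : n → ℂ) (v : p → ℂ) :
    star (M *ᵥ u) ⬝ᵥ (N *ᵥ v) = star u ⬝ᵥ ((Mᴴ * N) *ᵥ v) := by
  simp only [star_mulVec, dotProduct_mulVec, vecMul_vecMul]

lemma quadS {m n : Type*} [Fintype m] [Fintype n] [DecidableEq n] (S : Matrix m n ℂ)
    (hS : Sᴴ * S = 1) (u : n → ℂ) : star (S *ᵥ u) ⬝ᵥ (S *ᵥ u) = star u ⬝ᵥ u := by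
  rw [dd, hS, one_mulVec]

lemma quad {μ ν ρ σ : Type*} [Fintype μ] [Fintype ν] [Fintype ρ] [Fintype σ]
    [DecidableEq μ] [DecidableEq ν]
    (A : Matrix ρ μ ℂ) (B : Matrix ρ ν ℂ) (C : Matrix σ μ ℂ) (D : Matrix σ ν ℂ)
    (h1 : Aᴴ * A + Cᴴ * C = 1) (h2 : Aᴴ * B + Cᴴ * D = 0)
    (h3 : Bᴴ * A + Dᴴ * C = 0) (h4 : Bᴴ * B + Dᴴ * D = 1)
    (p : μ → ℂ) (x : ν → ℂ) :
    star (A *ᵥ p + B *ᵥ x) ⬝ᵥ (A *ᵥ p + B *ᵥ x)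
      + star (C *ᵥ p + D *ᵥ x) ⬝ᵥ (C *ᵥ p + D *ᵥ x)
      = star p ⬝ᵥ p + star x ⬝ᵥ x := by
  have t1 : star p ⬝ᵥ ((Aᴴ * A) *ᵥ p) + star p ⬝ᵥ ((Cᴴ * C) *ᵥ p) = star p ⬝ᵥ p := by
    rw [← dotProduct_add, ← add_mulVec, h1, one_mulVec]
  have t2 : star p ⬝ᵥ ((Aᴴ * B) *ᵥ x) + star p ⬝ᵥ ((Cᴴ * D) *ᵥ x) = 0 := by
    rw [← dotProduct_add, ← add_mulVec, h2, zero_mulVec, dotProduct_zero]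
  have t3 : star x ⬝ᵥ ((Bᴴ * A) *ᵥ p) + star x ⬝ᵥ ((Dᴴ * C) *ᵥ p) = 0 := by
    rw [← dotProduct_add, ← add_mulVec, h3, zero_mulVec, dotProduct_zero]
  have t4 : star x ⬝ᵥ ((Bᴴ * B) *ᵥ x) + star x ⬝ᵥ ((Dᴴ * D) *ᵥ x) = star x ⬝ᵥ x := by
    rw [← dotProduct_add, ← add_mulVec, h4, one_mulVec]
  simp only [star_add, add_dotProduct, dotProduct_add, dd]
  linear_combination t1 + t2 + t3 + t4

lemma star_single {n : Type*} [DecidableEq n] (i : n) :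
    star (Pi.single i (1 : ℂ)) = (Pi.single i 1 : n → ℂ) := by
  funext a
  simp [Pi.single_apply, apply_ite (star : ℂ → ℂ)]

lemma polar {n : Type*} [Fintype n] [DecidableEq n] (M : Matrix n n ℂ)
    (h : ∀ v : n → ℂ, star v ⬝ᵥ (M *ᵥ v) = 0) : M = 0 := by
  have hB : ∀ v w : n → ℂ, star v ⬝ᵥ (M *ᵥ w) = 0 := by
    intro v w
    have h1 := h (v + w)
    have h2 := h (v + Complex.I • w)
    simp only [star_add, star_smul, mulVec_add, mulVec_smul, add_dotProduct,
      dotProduct_add, smul_dotProduct, dotProduct_smul, smul_eq_mul, h v, h w,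
      Complex.star_def, Complex.conj_I, add_zero, zero_add, neg_smul, neg_mul,
      neg_dotProduct, mul_zero] at h1 h2
    have h2' : star v ⬝ᵥ (M *ᵥ w) = star w ⬝ᵥ (M *ᵥ v) := by
      have hmul : Complex.I * (star v ⬝ᵥ (M *ᵥ w)) = Complex.I * (star w ⬝ᵥ (M *ᵥ v)) := by
        linear_combination h2
      exact mul_left_cancel₀ Complex.I_ne_zero hmul
    linear_combination h1 / 2 + h2' / 2
  ext i j
  have := hB (Pi.single i 1) (Pi.single j 1)
  simpa [star_single, mulVec_single, single_dotProduct] using this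

open Kronecker in
lemma sT_kron {k : ℕ} (I : Type*) [DecidableEq I] (S : Matrix (Fin k) (Fin k) ℂ) :
    sT I S = (1 : Matrix I I ℂ) ⊗ₖ S := by
  ext ⟨i, j⟩ ⟨i', j'⟩
  simp [sT, Matrix.kroneckerMap_apply, Matrix.one_apply, ite_mul]

open Kronecker in
lemma sT_herm_mul {k : ℕ} {I : Type*} [Fintype I] [DecidableEq I]
    (S : Matrix (Fin k) (Fin k) ℂ) (hS : Sᴴ * S = 1) :
    (sT I S)ᴴ * sT I S = 1 := by
  have h1 : (sT I S)ᴴ = (1 : Matrix I I ℂ) ⊗ₖ Sᴴ := by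
    rw [sT_kron]
    ext ⟨i, j⟩ ⟨i', j'⟩
    simp [Matrix.conjTranspose_apply, Matrix.kroneckerMap_apply, Matrix.one_apply,
      apply_ite (starRingEnd ℂ), eq_comm]
  rw [h1, sT_kron, ← Matrix.mul_kronecker_mul, Matrix.one_mul, hS, Matrix.one_kronecker_one]

lemma unitary_blocks {A I : Type*} [Fintype A] [Fintype I] [DecidableEq A] [DecidableEq I]
    (u : Matrix (A ⊕ I) (A ⊕ I) ℂ) (hu : uᴴ * u = 1) :
    (u.toBlocks₁₁ᴴ * u.toBlocks₁₁ + u.toBlocks₂₁ᴴ * u.toBlocks₂₁ = 1)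
    ∧ (u.toBlocks₁₁ᴴ * u.toBlocks₁₂ + u.toBlocks₂₁ᴴ * u.toBlocks₂₂ = 0)
    ∧ (u.toBlocks₁₂ᴴ * u.toBlocks₁₂ + u.toBlocks₂₂ᴴ * u.toBlocks₂₂ = 1) := by
  have h := hu
  rw [← fromBlocks_toBlocks u, fromBlocks_conjTranspose, fromBlocks_multiply,
    ← fromBlocks_one] at h
  refine ⟨?_, ?_, ?_⟩
  · have h11 := congrArg Matrix.toBlocks₁₁ h
    simp only [Matrix.toBlocks_fromBlocks₁₁] at h11
    exact h11
  · have h12 := congrArg Matrix.toBlocks₁₂ h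
    simp only [Matrix.toBlocks_fromBlocks₁₂] at h12
    exact h12
  · have h22 := congrArg Matrix.toBlocks₂₂ h
    simp only [Matrix.toBlocks_fromBlocks₂₂] at h22
    exact h22

lemma lift_rels {k : ℕ} {A I : Type*} [Fintype A] [Fintype I] [DecidableEq A] [DecidableEq I]
    (u : Fin k → Matrix (A ⊕ I) (A ⊕ I) ℂ) (hu : ∀ j, (u j)ᴴ * u j = 1) :
    ((aT u)ᴴ * aT u + (cT u)ᴴ * cT u = 1)
    ∧ ((aT u)ᴴ * bT u + (cT u)ᴴ * dT u = 0)
    ∧ ((bT u)ᴴ * bT u + (dT u)ᴴ * dT u = 1) := by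
  refine ⟨?_, ?_, ?_⟩
  · simp only [aT, cT, blockDiagonal_conjTranspose, ← blockDiagonal_mul,
      ← blockDiagonal_add, ← blockDiagonal_one]
    exact congrArg _ (funext fun j => (unitary_blocks _ (hu j)).1)
  · simp only [aT, bT, cT, dT, blockDiagonal_conjTranspose, ← blockDiagonal_mul,
      ← blockDiagonal_add, ← blockDiagonal_zero]
    exact congrArg _ (funext fun j => (unitary_blocks _ (hu j)).2.1)
  · simp only [bT, dT, blockDiagonal_conjTranspose, ← blockDiagonal_mul,
      ← blockDiagonal_add, ← blockDiagonal_one]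
    exact congrArg _ (funext fun j => (unitary_blocks _ (hu j)).2.2)

lemma star_sum_elim {m n : Type*} (u : m → ℂ) (w : n → ℂ) :
    star (Sum.elim u w) = Sum.elim (star u) (star w) := by
  funext s
  cases s <;> rfl

end Chi2vAux

set_option maxHeartbeats 1000000 in
/-- for a family of unitary colligations and unitary `S`, `R` with
`E(𝔄; S, R)` invertible, the two-variable characteristic function lies in the
pseudo-unitary group `U(kα, kα)`: `χ* · J · χ = J` with `J = diag(1, −1)`. -/
theorem chi2v_pseudoUnitary {α N k : ℕ}
    (g : Fin k → Matrix (Fin α ⊕ Fin N) (Fin α ⊕ Fin N) ℂ)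
    (hg : ∀ j, g j ∈ Matrix.unitaryGroup (Fin α ⊕ Fin N) ℂ)
    (S R : Matrix (Fin k) (Fin k) ℂ)
    (hS : S ∈ Matrix.unitaryGroup (Fin k) ℂ) (hR : R ∈ Matrix.unitaryGroup (Fin k) ℂ)
    (hE : IsUnit (EMat g S R)) :
    (chi2v g S R)ᴴ
        * fromBlocks (1 : Matrix (Fin α × Fin k) (Fin α × Fin k) ℂ) 0 0 (-1)
        * chi2v g S R
      = fromBlocks (1 : Matrix (Fin α × Fin k) (Fin α × Fin k) ℂ) 0 0 (-1) := by
  classical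
  open Chi2vAux in
  -- abbreviations
  set A := aT g with hA
  set B := bT g with hB
  set C := cT g with hC
  set D := dT g with hD
  set AP := aT (gP g) with hAP
  set BP := bT (gP g) with hBP
  set CP := cT (gP g) with hCP
  set DP := dT (gP g) with hDP
  set Ss := sT (Fin N) S with hSs
  set Rr := sT (Fin N) R with hRr
  set E := EMat g S R with hEdef
  set F := (EMat g S R)⁻¹ with hF
  -- unitarity of each `g j` and each `gP g j`
  have hgu : ∀ j, (g j)ᴴ * g j = 1 := by
    intro j
    have := (Matrix.mem_unitaryGroup_iff').mp (hg j)
    simpa [Matrix.star_eq_conjTranspose] using this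
  have hgu' : ∀ j, g j * (g j)ᴴ = 1 := by
    intro j
    have := (Matrix.mem_unitaryGroup_iff).mp (hg j)
    simpa [Matrix.star_eq_conjTranspose] using this
  have hgPu : ∀ j, (gP g j)ᴴ * gP g j = 1 := by
    intro j
    have hP : gP g j = ((g j)ᴴ)ᵀ := by
      rw [gP]
      refine Matrix.inv_eq_left_inv ?_
      rw [← Matrix.transpose_mul, hgu' j, Matrix.transpose_one]
    have hTT : (((g j)ᴴ)ᵀ)ᴴ = (g j)ᵀ := by
      ext a b
      simp [Matrix.conjTranspose_apply, Matrix.transpose_apply]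
    rw [hP, hTT, ← Matrix.transpose_mul, hgu j, Matrix.transpose_one]
  -- lifted block relations
  obtain ⟨H1, H2, H4⟩ := Chi2vAux.lift_rels g hgu
  obtain ⟨K1, K2, K4⟩ := Chi2vAux.lift_rels (gP g) hgPu
  simp only [← hA, ← hB, ← hC, ← hD] at H1 H2 H4
  simp only [← hAP, ← hBP, ← hCP, ← hDP] at K1 K2 K4
  have H3 : Bᴴ * A + Dᴴ * C = 0 := by
    have := congrArg Matrix.conjTranspose H2
    simpa [Matrix.conjTranspose_add, Matrix.conjTranspose_mul,
      Matrix.conjTranspose_conjTranspose, add_comm] using this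
  have K3 : BPᴴ * AP + DPᴴ * CP = 0 := by
    have := congrArg Matrix.conjTranspose K2
    simpa [Matrix.conjTranspose_add, Matrix.conjTranspose_mul,
      Matrix.conjTranspose_conjTranspose, add_comm] using this
  -- unitarity of the S̃, R̃ matrices
  have hSu : Sᴴ * S = 1 := by
    have := (Matrix.mem_unitaryGroup_iff').mp hS
    simpa [Matrix.star_eq_conjTranspose] using this
  have hRu : Rᴴ * R = 1 := by
    have := (Matrix.mem_unitaryGroup_iff').mp hR
    simpa [Matrix.star_eq_conjTranspose] using this
  have hSS : Ssᴴ * Ss = 1 := Chi2vAux.sT_herm_mul S hSu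
  have hRR : Rrᴴ * Rr = 1 := Chi2vAux.sT_herm_mul R hRu
  -- inverse of E
  have hEF : E * F = 1 := Matrix.mul_nonsing_inv _ ((Matrix.isUnit_iff_isUnit_det _).mp hE)
  have hDE : Ss * (DP * Rr) = D - E := by
    rw [hEdef, EMat, ← hD, ← hDP, ← hSs, ← hRr, sub_sub_cancel, Matrix.mul_assoc]
  -- the characteristic function as a block matrix
  have hX0 : chi2v g S R
      = fromBlocks (A - B * F * C) (B * F * Ss * CP) (-(BP * Rr * F * C))
          (AP + BP * Rr * F * Ss * CP) := rfl
  have hX : chi2v g S R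
      = fromBlocks (A - B * (F * C)) (B * (F * (Ss * CP))) (-(BP * (Rr * (F * C))))
          (AP + BP * (Rr * (F * (Ss * CP)))) := by
    rw [hX0]
    simp only [Matrix.mul_assoc]
  set J : Matrix ((Fin α × Fin k) ⊕ (Fin α × Fin k)) ((Fin α × Fin k) ⊕ (Fin α × Fin k)) ℂ :=
    fromBlocks 1 0 0 (-1) with hJ
  set X := chi2v g S R with hXdef
  clear_value A B C D AP BP CP DP Ss Rr E F J X
  -- main pointwise identity
  have main : ∀ v : ((Fin α × Fin k) ⊕ (Fin α × Fin k)) → ℂ,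
      star v ⬝ᵥ ((Xᴴ * J * X) *ᵥ v) = star v ⬝ᵥ (J *ᵥ v) := by
    intro v
    set p : (Fin α × Fin k) → ℂ := v ∘ Sum.inl with hp
    set p' : (Fin α × Fin k) → ℂ := v ∘ Sum.inr with hp'
    have hv : v = Sum.elim p p' := by
      funext s
      cases s <;> rfl
    set x := F *ᵥ (Ss *ᵥ (CP *ᵥ p') - C *ᵥ p) with hx
    set y := Rr *ᵥ x with hy
    have hq : X *ᵥ v = Sum.elim (A *ᵥ p + B *ᵥ x) (AP *ᵥ p' + BP *ᵥ y) := by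
      rw [hX, hv, Matrix.fromBlocks_mulVec, hy, hx]
      simp only [Sum.elim_comp_inl, Sum.elim_comp_inr, Matrix.sub_mulVec, Matrix.add_mulVec,
        ← Matrix.mulVec_mulVec, Matrix.mulVec_sub, Matrix.neg_mulVec]
      congr 1 <;> abel
    have hS2 : Ss *ᵥ (CP *ᵥ p' + DP *ᵥ y) = C *ᵥ p + D *ᵥ x := by
      have h2 : E *ᵥ x = Ss *ᵥ (CP *ᵥ p') - C *ᵥ p := by
        rw [hx, Matrix.mulVec_mulVec, hEF, Matrix.one_mulVec]
      calc Ss *ᵥ (CP *ᵥ p' + DP *ᵥ y)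
          = Ss *ᵥ (CP *ᵥ p') + (Ss * (DP * Rr)) *ᵥ x := by
            rw [hy]
            simp only [Matrix.mulVec_add, Matrix.mulVec_mulVec]
        _ = Ss *ᵥ (CP *ᵥ p') + (D *ᵥ x - (Ss *ᵥ (CP *ᵥ p') - C *ᵥ p)) := by
            rw [hDE, Matrix.sub_mulVec, h2]
        _ = C *ᵥ p + D *ᵥ x := by abel
    have QA := Chi2vAux.quad A B C D H1 H2 H3 H4 p x
    have QB := Chi2vAux.quad AP BP CP DP K1 K2 K3 K4 p' y
    have QS : star (C *ᵥ p + D *ᵥ x) ⬝ᵥ (C *ᵥ p + D *ᵥ x)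
        = star (CP *ᵥ p' + DP *ᵥ y) ⬝ᵥ (CP *ᵥ p' + DP *ᵥ y) := by
      rw [← hS2]
      exact Chi2vAux.quadS Ss hSS _
    have QR : star y ⬝ᵥ y = star x ⬝ᵥ x := by
      rw [hy]
      exact Chi2vAux.quadS Rr hRR x
    have lhs_eq : star v ⬝ᵥ ((Xᴴ * J * X) *ᵥ v)
        = star (A *ᵥ p + B *ᵥ x) ⬝ᵥ (A *ᵥ p + B *ᵥ x)
          - star (AP *ᵥ p' + BP *ᵥ y) ⬝ᵥ (AP *ᵥ p' + BP *ᵥ y) := by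
      rw [Matrix.mul_assoc, ← Chi2vAux.dd X (J * X) v v, ← Matrix.mulVec_mulVec, hq, hJ,
        Matrix.fromBlocks_mulVec]
      simp only [Sum.elim_comp_inl, Sum.elim_comp_inr, Matrix.one_mulVec,
        Matrix.zero_mulVec, Matrix.neg_mulVec, add_zero, zero_add,
        Chi2vAux.star_sum_elim, sumElim_dotProduct_sumElim, dotProduct_neg]
      ring
    have rhs_eq : star v ⬝ᵥ (J *ᵥ v) = star p ⬝ᵥ p - star p' ⬝ᵥ p' := by
      rw [hv, hJ, Matrix.fromBlocks_mulVec]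
      simp only [Sum.elim_comp_inl, Sum.elim_comp_inr, Matrix.one_mulVec,
        Matrix.zero_mulVec, Matrix.neg_mulVec, add_zero, zero_add,
        Chi2vAux.star_sum_elim, sumElim_dotProduct_sumElim, dotProduct_neg]
      ring
    rw [lhs_eq, rhs_eq]
    linear_combination QA - QB - QS - QR
  have hz : Xᴴ * J * X - J = 0 := by
    refine Chi2vAux.polar _ fun v => ?_
    rw [Matrix.sub_mulVec, dotProduct_sub, main v, sub_self]
  exact sub_eq_zero.mp hz
end

section
/- Let α, N, k be natural numbers and let 𝔄 = (g_1,…,g_k) be a family of invertible (α+N)×(α+N) complex matrices. Let S, R be k×k matrices such that both E(𝔄; S, R) and E(𝔄; Sᵗ, Rᵗ) are invertible. Let J_s be the (2kα)×(2kα) block matrix [[0, 1_{kα}],[−1_{kα}, 0]], and for a (2kα)×(2kα) matrix X define X^△ = J_s⁻¹ · Xᵗ · J_s (the transpose with respect to the skew-symmetric bilinear form Λ(p,p̃) = Σ_j ((p_j⁺, p̃_j⁻) − (p_j⁻, p̃_j⁺)), where (·,·) is the standard bilinear form). Then χ(𝔄; Sᵗ, Rᵗ) · (χ(𝔄; S,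 R))^△ = 1, i.e. χ(𝔄; Sᵗ, Rᵗ) = (χ(𝔄; S, R)^△)⁻¹. In particular, if S and R are symmetric matrices, then χ(𝔄; S, R)ᵗ · J_s · χ(𝔄; S, R) = J_s, i.e. χ(𝔄; S, R) belongs to the complex symplectic group Sp(2kα, ℂ). -/
open Matrix

set_option maxHeartbeats 3200000

section ChiAux

lemma chiaux_tb11 {n o l m α : Type*} (M : Matrix (n ⊕ o) (l ⊕ m) α) :
    (Mᵀ).toBlocks₁₁ = (M.toBlocks₁₁)ᵀ := rfl
lemma chiaux_tb12 {n o l m α : Type*} (M : Matrix (n ⊕ o) (l ⊕ m) α) :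
    (Mᵀ).toBlocks₁₂ = (M.toBlocks₂₁)ᵀ := rfl
lemma chiaux_tb21 {n o l m α : Type*} (M : Matrix (n ⊕ o) (l ⊕ m) α) :
    (Mᵀ).toBlocks₂₁ = (M.toBlocks₁₂)ᵀ := rfl
lemma chiaux_tb22 {n o l m α : Type*} (M : Matrix (n ⊕ o) (l ⊕ m) α) :
    (Mᵀ).toBlocks₂₂ = (M.toBlocks₂₂)ᵀ := rfl

lemma chiaux_sT_transpose {k : ℕ} (I : Type*) [DecidableEq I]
    (S : Matrix (Fin k) (Fin k) ℂ) : (sT I S)ᵀ = sT I Sᵀ := by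
  ext ⟨p, i⟩ ⟨q, j⟩
  simp only [sT, transpose_apply, of_apply]
  by_cases h : p = q
  · simp [h]
  · simp [h, Ne.symm h]

lemma chiaux_bd_helper {o m n p q : Type*} [DecidableEq o] [Fintype n] [Fintype o] [Fintype q]
    (M : o → Matrix m n ℂ) (N : o → Matrix n p ℂ)
    (M' : o → Matrix m q ℂ) (N' : o → Matrix q p ℂ) :
    blockDiagonal M * blockDiagonal N + blockDiagonal M' * blockDiagonal N'
      = blockDiagonal fun j => M j * N j + M' j * N' j := by
  rw [← blockDiagonal_mul, ← blockDiagonal_mul, ← blockDiagonal_add]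
  rfl

lemma chiaux_key {P Q : Type*} [Fintype P] [Fintype Q] [DecidableEq P] [DecidableEq Q]
    (a a' : Matrix P P ℂ) (b b' : Matrix P Q ℂ) (c c' : Matrix Q P ℂ)
    (d d' σ ρ Ei F : Matrix Q Q ℂ)
    (h1 : a * a'ᵀ + b * b'ᵀ = 1) (h2 : a * c'ᵀ + b * d'ᵀ = 0)
    (h3 : c * a'ᵀ + d * b'ᵀ = 0) (h4 : c * c'ᵀ + d * d'ᵀ = 1)
    (hEi : Ei * (d - σ * d' * ρ) = 1)
    (hF : (dᵀ - ρ * d'ᵀ * σ) * F = 1) :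
    fromBlocks (a - b * Ei * c) (b * Ei * σ * c')
        (-(b' * ρ * Ei * c)) (a' + b' * ρ * Ei * σ * c')
      * fromBlocks (a'ᵀ + c'ᵀ * (σ * (F * (ρ * b'ᵀ)))) (-(c'ᵀ * (σ * (F * bᵀ))))
          (cᵀ * (F * (ρ * b'ᵀ))) (aᵀ - cᵀ * (F * bᵀ)) = 1 := by
  have h1' : a * a'ᵀ = 1 - b * b'ᵀ := eq_sub_of_add_eq h1
  have h2' : a * c'ᵀ = -(b * d'ᵀ) := eq_neg_of_add_eq_zero_left h2
  have h3' : c * a'ᵀ = -(d * b'ᵀ) := eq_neg_of_add_eq_zero_left h3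
  have h4' : c * c'ᵀ = 1 - d * d'ᵀ := eq_sub_of_add_eq h4
  have t1' : a' * aᵀ = 1 - b' * bᵀ := by
    have := congrArg Matrix.transpose h1
    simp only [transpose_add, transpose_mul, transpose_transpose, transpose_one] at this
    exact eq_sub_of_add_eq this
  have t2' : c' * aᵀ = -(d' * bᵀ) := by
    have := congrArg Matrix.transpose h2
    simp only [transpose_add, transpose_mul, transpose_transpose, transpose_zero] at this
    exact eq_neg_of_add_eq_zero_left this
  have t3' : a' * cᵀ = -(b' * dᵀ) := by
    have := congrArg Matrix.transpose h3
    simp only [transpose_add, transpose_mul, transpose_transpose, transpose_zero] at this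
    exact eq_neg_of_add_eq_zero_left this
  have t4' : c' * cᵀ = 1 - d' * dᵀ := by
    have := congrArg Matrix.transpose h4
    simp only [transpose_add, transpose_mul, transpose_transpose, transpose_one] at this
    exact eq_sub_of_add_eq this
  have hZ : (-1 - d'ᵀ*(σ*(F*ρ)) + Ei*d - Ei*(σ*(F*ρ)) + Ei*(d*(d'ᵀ*(σ*(F*ρ)))) + Ei*(σ*(F*ρ))
      - Ei*(σ*(d'*(dᵀ*(F*ρ)))) : Matrix Q Q ℂ) = 0 := by
    calc (-1 - d'ᵀ*(σ*(F*ρ)) + Ei*d - Ei*(σ*(F*ρ)) + Ei*(d*(d'ᵀ*(σ*(F*ρ)))) + Ei*(σ*(F*ρ))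
        - Ei*(σ*(d'*(dᵀ*(F*ρ)))) : Matrix Q Q ℂ)
        = -1 + Ei*d + (Ei*(d - σ*d'*ρ))*(d'ᵀ*(σ*(F*ρ)))
          - Ei*(σ*(d'*(((dᵀ - ρ*d'ᵀ*σ)*F)*ρ))) - d'ᵀ*(σ*(F*ρ)) := by noncomm_ring
      _ = -1 + Ei*d + (1:Matrix Q Q ℂ)*(d'ᵀ*(σ*(F*ρ)))
          - Ei*(σ*(d'*((1:Matrix Q Q ℂ)*ρ))) - d'ᵀ*(σ*(F*ρ)) := by rw [hEi, hF]
      _ = -1 + Ei*(d - σ*d'*ρ) := by noncomm_ring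
      _ = -1 + 1 := by rw [hEi]
      _ = 0 := neg_add_cancel 1
  have hW : (d'ᵀ*(σ*F) + Ei*(σ*F) - Ei*(d*(d'ᵀ*(σ*F))) - Ei*(σ*d') - Ei*(σ*F)
      + Ei*(σ*(d'*(dᵀ*F))) : Matrix Q Q ℂ) = 0 := by
    calc (d'ᵀ*(σ*F) + Ei*(σ*F) - Ei*(d*(d'ᵀ*(σ*F))) - Ei*(σ*d') - Ei*(σ*F)
        + Ei*(σ*(d'*(dᵀ*F))) : Matrix Q Q ℂ)
        = (1:Matrix Q Q ℂ)*(d'ᵀ*(σ*F)) - Ei*(d*(d'ᵀ*(σ*F))) - Ei*(σ*d')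
          + Ei*(σ*(d'*(dᵀ*F))) := by noncomm_ring
      _ = (Ei*(d - σ*d'*ρ))*(d'ᵀ*(σ*F)) - Ei*(d*(d'ᵀ*(σ*F))) - Ei*(σ*d')
          + Ei*(σ*(d'*(dᵀ*F))) := by rw [hEi]
      _ = Ei*(σ*(d'*((dᵀ - ρ*d'ᵀ*σ)*F))) - Ei*(σ*d') := by noncomm_ring
      _ = Ei*(σ*(d'*(1:Matrix Q Q ℂ))) - Ei*(σ*d') := by rw [hF]
      _ = 0 := by noncomm_ring
  have hV : (ρ*(Ei*d) - ρ*(Ei*(σ*(F*ρ))) + ρ*(Ei*(d*(d'ᵀ*(σ*(F*ρ))))) - dᵀ*(F*ρ)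
      + ρ*(Ei*(σ*(F*ρ))) - ρ*(Ei*(σ*(d'*(dᵀ*(F*ρ))))) : Matrix Q Q ℂ) = 0 := by
    calc (ρ*(Ei*d) - ρ*(Ei*(σ*(F*ρ))) + ρ*(Ei*(d*(d'ᵀ*(σ*(F*ρ))))) - dᵀ*(F*ρ)
        + ρ*(Ei*(σ*(F*ρ))) - ρ*(Ei*(σ*(d'*(dᵀ*(F*ρ))))) : Matrix Q Q ℂ)
        = ρ*(Ei*d) - dᵀ*(F*ρ) + ρ*((Ei*(d - σ*d'*ρ))*(d'ᵀ*(σ*(F*ρ))))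
          - ρ*(Ei*(σ*(d'*(((dᵀ - ρ*d'ᵀ*σ)*F)*ρ)))) := by noncomm_ring
      _ = ρ*(Ei*d) - dᵀ*(F*ρ) + ρ*((1:Matrix Q Q ℂ)*(d'ᵀ*(σ*(F*ρ))))
          - ρ*(Ei*(σ*(d'*((1:Matrix Q Q ℂ)*ρ)))) := by rw [hEi, hF]
      _ = ρ*(Ei*(d - σ*d'*ρ)) - ((dᵀ - ρ*d'ᵀ*σ)*F)*ρ := by noncomm_ring
      _ = ρ*(1:Matrix Q Q ℂ) - (1:Matrix Q Q ℂ)*ρ := by rw [hEi, hF]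
      _ = 0 := by noncomm_ring
  have hU : (ρ*(Ei*(σ*F)) - ρ*(Ei*(d*(d'ᵀ*(σ*F)))) - 1 + dᵀ*F - ρ*(Ei*(σ*d'))
      - ρ*(Ei*(σ*F)) + ρ*(Ei*(σ*(d'*(dᵀ*F)))) : Matrix Q Q ℂ) = 0 := by
    calc (ρ*(Ei*(σ*F)) - ρ*(Ei*(d*(d'ᵀ*(σ*F)))) - 1 + dᵀ*F - ρ*(Ei*(σ*d'))
        - ρ*(Ei*(σ*F)) + ρ*(Ei*(σ*(d'*(dᵀ*F)))) : Matrix Q Q ℂ)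
        = -(ρ*((Ei*(d - σ*d'*ρ))*(d'ᵀ*(σ*F)))) + ρ*(Ei*(σ*(d'*((dᵀ - ρ*d'ᵀ*σ)*F))))
          - 1 + dᵀ*F - ρ*(Ei*(σ*d')) := by noncomm_ring
      _ = -(ρ*((1:Matrix Q Q ℂ)*(d'ᵀ*(σ*F)))) + ρ*(Ei*(σ*(d'*(1:Matrix Q Q ℂ))))
          - 1 + dᵀ*F - ρ*(Ei*(σ*d')) := by rw [hEi, hF]
      _ = (dᵀ - ρ*d'ᵀ*σ)*F - 1 := by noncomm_ring
      _ = 0 := by rw [hF]; exact sub_self 1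
  rw [fromBlocks_multiply, ← fromBlocks_one, fromBlocks_inj]
  refine ⟨?_, ?_, ?_, ?_⟩
  · calc (a - b * Ei * c) * (a'ᵀ + c'ᵀ * (σ * (F * (ρ * b'ᵀ))))
          + (b * Ei * σ * c') * (cᵀ * (F * (ρ * b'ᵀ)))
        = a * a'ᵀ + (a * c'ᵀ) * (σ * (F * (ρ * b'ᵀ))) - b * (Ei * (c * a'ᵀ))
          - b * (Ei * ((c * c'ᵀ) * (σ * (F * (ρ * b'ᵀ)))))
          + b * (Ei * (σ * ((c' * cᵀ) * (F * (ρ * b'ᵀ))))) := by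
          simp only [Matrix.mul_add, Matrix.add_mul, Matrix.sub_mul, Matrix.mul_sub,
            Matrix.mul_assoc]
          abel
      _ = (1 - b * b'ᵀ) + (-(b * d'ᵀ)) * (σ * (F * (ρ * b'ᵀ))) - b * (Ei * (-(d * b'ᵀ)))
          - b * (Ei * ((1 - d * d'ᵀ) * (σ * (F * (ρ * b'ᵀ)))))
          + b * (Ei * (σ * ((1 - d' * dᵀ) * (F * (ρ * b'ᵀ))))) := by
          rw [h1', h2', h3', h4', t4']
      _ = 1 + b * ((-1 - d'ᵀ*(σ*(F*ρ)) + Ei*d - Ei*(σ*(F*ρ)) + Ei*(d*(d'ᵀ*(σ*(F*ρ))))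
          + Ei*(σ*(F*ρ)) - Ei*(σ*(d'*(dᵀ*(F*ρ))))) * b'ᵀ) := by
          simp only [Matrix.mul_add, Matrix.add_mul, Matrix.sub_mul, Matrix.mul_sub,
            Matrix.neg_mul, Matrix.mul_neg, Matrix.mul_one, Matrix.one_mul,
            Matrix.mul_assoc]
          abel
      _ = 1 := by rw [hZ]; simp
  · calc (a - b * Ei * c) * (-(c'ᵀ * (σ * (F * bᵀ))))
          + (b * Ei * σ * c') * (aᵀ - cᵀ * (F * bᵀ))
        = -((a * c'ᵀ) * (σ * (F * bᵀ))) + b * (Ei * ((c * c'ᵀ) * (σ * (F * bᵀ))))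
          + b * (Ei * (σ * (c' * aᵀ))) - b * (Ei * (σ * ((c' * cᵀ) * (F * bᵀ)))) := by
          simp only [Matrix.mul_add, Matrix.add_mul, Matrix.sub_mul, Matrix.mul_sub,
            Matrix.neg_mul, Matrix.mul_neg, Matrix.mul_assoc]
          abel
      _ = -((-(b * d'ᵀ)) * (σ * (F * bᵀ))) + b * (Ei * ((1 - d * d'ᵀ) * (σ * (F * bᵀ))))
          + b * (Ei * (σ * (-(d' * bᵀ)))) - b * (Ei * (σ * ((1 - d' * dᵀ) * (F * bᵀ)))) := by
          rw [h2', h4', t2', t4']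
      _ = b * ((d'ᵀ*(σ*F) + Ei*(σ*F) - Ei*(d*(d'ᵀ*(σ*F))) - Ei*(σ*d') - Ei*(σ*F)
          + Ei*(σ*(d'*(dᵀ*F)))) * bᵀ) := by
          simp only [Matrix.mul_add, Matrix.add_mul, Matrix.sub_mul, Matrix.mul_sub,
            Matrix.neg_mul, Matrix.mul_neg, Matrix.mul_one, Matrix.one_mul,
            Matrix.mul_assoc, neg_neg]
          abel
      _ = 0 := by rw [hW]; simp
  · calc (-(b' * ρ * Ei * c)) * (a'ᵀ + c'ᵀ * (σ * (F * (ρ * b'ᵀ))))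
          + (a' + b' * ρ * Ei * σ * c') * (cᵀ * (F * (ρ * b'ᵀ)))
        = -(b' * (ρ * (Ei * (c * a'ᵀ)))) - b' * (ρ * (Ei * ((c * c'ᵀ) * (σ * (F * (ρ * b'ᵀ))))))
          + (a' * cᵀ) * (F * (ρ * b'ᵀ))
          + b' * (ρ * (Ei * (σ * ((c' * cᵀ) * (F * (ρ * b'ᵀ)))))) := by
          simp only [Matrix.mul_add, Matrix.add_mul, Matrix.sub_mul, Matrix.mul_sub,
            Matrix.neg_mul, Matrix.mul_neg, Matrix.mul_assoc]
          abel
      _ = -(b' * (ρ * (Ei * (-(d * b'ᵀ)))))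
          - b' * (ρ * (Ei * ((1 - d * d'ᵀ) * (σ * (F * (ρ * b'ᵀ))))))
          + (-(b' * dᵀ)) * (F * (ρ * b'ᵀ))
          + b' * (ρ * (Ei * (σ * ((1 - d' * dᵀ) * (F * (ρ * b'ᵀ)))))) := by
          rw [h3', h4', t3', t4']
      _ = b' * ((ρ*(Ei*d) - ρ*(Ei*(σ*(F*ρ))) + ρ*(Ei*(d*(d'ᵀ*(σ*(F*ρ))))) - dᵀ*(F*ρ)
          + ρ*(Ei*(σ*(F*ρ))) - ρ*(Ei*(σ*(d'*(dᵀ*(F*ρ)))))) * b'ᵀ) := by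
          simp only [Matrix.mul_add, Matrix.add_mul, Matrix.sub_mul, Matrix.mul_sub,
            Matrix.neg_mul, Matrix.mul_neg, Matrix.mul_one, Matrix.one_mul,
            Matrix.mul_assoc, neg_neg]
          abel
      _ = 0 := by rw [hV]; simp
  · calc (-(b' * ρ * Ei * c)) * (-(c'ᵀ * (σ * (F * bᵀ))))
          + (a' + b' * ρ * Ei * σ * c') * (aᵀ - cᵀ * (F * bᵀ))
        = b' * (ρ * (Ei * ((c * c'ᵀ) * (σ * (F * bᵀ))))) + a' * aᵀ - (a' * cᵀ) * (F * bᵀ)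
          + b' * (ρ * (Ei * (σ * (c' * aᵀ))))
          - b' * (ρ * (Ei * (σ * ((c' * cᵀ) * (F * bᵀ))))) := by
          simp only [Matrix.mul_add, Matrix.add_mul, Matrix.sub_mul, Matrix.mul_sub,
            Matrix.neg_mul, Matrix.mul_neg, Matrix.mul_assoc, neg_neg]
          abel
      _ = b' * (ρ * (Ei * ((1 - d * d'ᵀ) * (σ * (F * bᵀ))))) + (1 - b' * bᵀ)
          - (-(b' * dᵀ)) * (F * bᵀ) + b' * (ρ * (Ei * (σ * (-(d' * bᵀ)))))
          - b' * (ρ * (Ei * (σ * ((1 - d' * dᵀ) * (F * bᵀ))))) := by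
          rw [h4', t1', t2', t3', t4']
      _ = 1 + b' * ((ρ*(Ei*(σ*F)) - ρ*(Ei*(d*(d'ᵀ*(σ*F)))) - 1 + dᵀ*F - ρ*(Ei*(σ*d'))
          - ρ*(Ei*(σ*F)) + ρ*(Ei*(σ*(d'*(dᵀ*F))))) * bᵀ) := by
          simp only [Matrix.mul_add, Matrix.add_mul, Matrix.sub_mul, Matrix.mul_sub,
            Matrix.neg_mul, Matrix.mul_neg, Matrix.mul_one, Matrix.one_mul,
            Matrix.mul_assoc, neg_neg]
          abel
      _ = 1 := by rw [hU]; simp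

end ChiAux

/-- the skew-symmetric (symplectic) Riemann–Schwarz type identity for the
two-variable characteristic function: with `J_s = [[0, 1],[−1, 0]]` and
`X^△ = J_s⁻¹·Xᵗ·J_s`, one has `χ(𝔄; Sᵗ, Rᵗ) · (χ(𝔄; S, R))^△ = 1`. In particular,
if `S` and `R` are symmetric then `χ(𝔄; S, R)` lies in the complex symplectic group:
`χᵗ · J_s · χ = J_s`. -/
theorem chi2v_symplectic {α N k : ℕ}
    (g : Fin k → Matrix (Fin α ⊕ Fin N) (Fin α ⊕ Fin N) ℂ)
    (hg : ∀ j, IsUnit (g j))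
    (S R : Matrix (Fin k) (Fin k) ℂ)
    (hE : IsUnit (EMat g S R)) (hE' : IsUnit (EMat g Sᵀ Rᵀ)) :
    chi2v g Sᵀ Rᵀ
        * ((fromBlocks 0 (1 : Matrix (Fin α × Fin k) (Fin α × Fin k) ℂ) (-1) 0)⁻¹
            * (chi2v g S R)ᵀ
            * fromBlocks 0 (1 : Matrix (Fin α × Fin k) (Fin α × Fin k) ℂ) (-1) 0)
      = 1 ∧
    (Sᵀ = S → Rᵀ = R →
      (chi2v g S R)ᵀ
          * fromBlocks 0 (1 : Matrix (Fin α × Fin k) (Fin α × Fin k) ℂ) (-1) 0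
          * chi2v g S R
        = fromBlocks 0 (1 : Matrix (Fin α × Fin k) (Fin α × Fin k) ℂ) (-1) 0) := by
  classical
  -- abbreviations
  set P := Fin α × Fin k
  -- per-index colligation identities
  have hgPt : ∀ j, (gP g j)ᵀ = (g j)⁻¹ := fun j => by
    rw [gP, Matrix.transpose_nonsing_inv, transpose_transpose]
  have hb : ∀ j, (g j) * (g j)⁻¹ = 1 := fun j =>
    Matrix.mul_nonsing_inv _ ((Matrix.isUnit_iff_isUnit_det _).mp (hg j))
  have hblocks : ∀ j,
      ((g j).toBlocks₁₁ * ((g j)⁻¹).toBlocks₁₁ + (g j).toBlocks₁₂ * ((g j)⁻¹).toBlocks₂₁ = 1) ∧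
      ((g j).toBlocks₁₁ * ((g j)⁻¹).toBlocks₁₂ + (g j).toBlocks₁₂ * ((g j)⁻¹).toBlocks₂₂ = 0) ∧
      ((g j).toBlocks₂₁ * ((g j)⁻¹).toBlocks₁₁ + (g j).toBlocks₂₂ * ((g j)⁻¹).toBlocks₂₁ = 0) ∧
      ((g j).toBlocks₂₁ * ((g j)⁻¹).toBlocks₁₂ + (g j).toBlocks₂₂ * ((g j)⁻¹).toBlocks₂₂ = 1) := by
    intro j
    have h : fromBlocks ((g j).toBlocks₁₁) ((g j).toBlocks₁₂) ((g j).toBlocks₂₁)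
          ((g j).toBlocks₂₂)
        * fromBlocks (((g j)⁻¹).toBlocks₁₁) (((g j)⁻¹).toBlocks₁₂) (((g j)⁻¹).toBlocks₂₁)
          (((g j)⁻¹).toBlocks₂₂) = 1 := by
      rw [fromBlocks_toBlocks, fromBlocks_toBlocks]; exact hb j
    rw [fromBlocks_multiply, ← fromBlocks_one, fromBlocks_inj] at h
    exact ⟨h.1, h.2.1, h.2.2.1, h.2.2.2⟩
  -- transposes of the blocks of gP g are blocks of (g j)⁻¹
  have ea : (aT (gP g))ᵀ = blockDiagonal fun j => ((g j)⁻¹).toBlocks₁₁ := by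
    have hfun : (fun j => ((gP g j).toBlocks₁₁)ᵀ) = fun j => ((g j)⁻¹).toBlocks₁₁ := by
      funext j
      rw [← chiaux_tb11, hgPt j]
    rw [aT, blockDiagonal_transpose, hfun]
  have eb : (bT (gP g))ᵀ = blockDiagonal fun j => ((g j)⁻¹).toBlocks₂₁ := by
    have hfun : (fun j => ((gP g j).toBlocks₁₂)ᵀ) = fun j => ((g j)⁻¹).toBlocks₂₁ := by
      funext j
      rw [← chiaux_tb21, hgPt j]
    rw [bT, blockDiagonal_transpose, hfun]
  have ec : (cT (gP g))ᵀ = blockDiagonal fun j => ((g j)⁻¹).toBlocks₁₂ := by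
    have hfun : (fun j => ((gP g j).toBlocks₂₁)ᵀ) = fun j => ((g j)⁻¹).toBlocks₁₂ := by
      funext j
      rw [← chiaux_tb12, hgPt j]
    rw [cT, blockDiagonal_transpose, hfun]
  have ed : (dT (gP g))ᵀ = blockDiagonal fun j => ((g j)⁻¹).toBlocks₂₂ := by
    have hfun : (fun j => ((gP g j).toBlocks₂₂)ᵀ) = fun j => ((g j)⁻¹).toBlocks₂₂ := by
      funext j
      rw [← chiaux_tb22, hgPt j]
    rw [dT, blockDiagonal_transpose, hfun]
  -- lifted colligation identities
  have H1 : aT g * (aT (gP g))ᵀ + bT g * (bT (gP g))ᵀ = 1 := by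
    rw [ea, eb, aT, bT, chiaux_bd_helper]
    rw [show (fun j => (g j).toBlocks₁₁ * ((g j)⁻¹).toBlocks₁₁
        + (g j).toBlocks₁₂ * ((g j)⁻¹).toBlocks₂₁)
      = (1 : Fin k → Matrix (Fin α) (Fin α) ℂ) from funext fun j => (hblocks j).1]
    exact blockDiagonal_one
  have H2 : aT g * (cT (gP g))ᵀ + bT g * (dT (gP g))ᵀ = 0 := by
    rw [ec, ed, aT, bT, chiaux_bd_helper]
    rw [show (fun j => (g j).toBlocks₁₁ * ((g j)⁻¹).toBlocks₁₂
        + (g j).toBlocks₁₂ * ((g j)⁻¹).toBlocks₂₂)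
      = (0 : Fin k → Matrix (Fin α) (Fin N) ℂ) from funext fun j => (hblocks j).2.1]
    exact blockDiagonal_zero
  have H3 : cT g * (aT (gP g))ᵀ + dT g * (bT (gP g))ᵀ = 0 := by
    rw [ea, eb, cT, dT, chiaux_bd_helper]
    rw [show (fun j => (g j).toBlocks₂₁ * ((g j)⁻¹).toBlocks₁₁
        + (g j).toBlocks₂₂ * ((g j)⁻¹).toBlocks₂₁)
      = (0 : Fin k → Matrix (Fin N) (Fin α) ℂ) from funext fun j => (hblocks j).2.2.1]
    exact blockDiagonal_zero
  have H4 : cT g * (cT (gP g))ᵀ + dT g * (dT (gP g))ᵀ = 1 := by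
    rw [ec, ed, cT, dT, chiaux_bd_helper]
    rw [show (fun j => (g j).toBlocks₂₁ * ((g j)⁻¹).toBlocks₁₂
        + (g j).toBlocks₂₂ * ((g j)⁻¹).toBlocks₂₂)
      = (1 : Fin k → Matrix (Fin N) (Fin N) ℂ) from funext fun j => (hblocks j).2.2.2]
    exact blockDiagonal_one
  -- inverse facts
  have hEi : (EMat g Sᵀ Rᵀ)⁻¹
      * (dT g - sT (Fin N) Sᵀ * dT (gP g) * sT (Fin N) Rᵀ) = 1 := by
    have := Matrix.nonsing_inv_mul (EMat g Sᵀ Rᵀ)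
      ((Matrix.isUnit_iff_isUnit_det _).mp hE')
    rw [EMat] at this
    exact this
  have hF : ((dT g)ᵀ - sT (Fin N) Rᵀ * (dT (gP g))ᵀ * sT (Fin N) Sᵀ)
      * ((EMat g S R)⁻¹)ᵀ = 1 := by
    have h0 := Matrix.nonsing_inv_mul (EMat g S R)
      ((Matrix.isUnit_iff_isUnit_det _).mp hE)
    have h1 := congrArg Matrix.transpose h0
    rw [transpose_mul, transpose_one, EMat, transpose_sub, transpose_mul, transpose_mul,
      chiaux_sT_transpose, chiaux_sT_transpose, ← Matrix.mul_assoc] at h1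
    exact h1
  -- the symplectic J and its inverse
  have hJJ' : ((fromBlocks 0 1 (-1) 0 : Matrix (P ⊕ P) (P ⊕ P) ℂ))
      * ((fromBlocks 0 (-1) 1 0 : Matrix (P ⊕ P) (P ⊕ P) ℂ)) = 1 := by
    rw [fromBlocks_multiply, ← fromBlocks_one]
    simp
  have hJinv : ((fromBlocks 0 1 (-1) 0 : Matrix (P ⊕ P) (P ⊕ P) ℂ))⁻¹
      = (fromBlocks 0 (-1) 1 0 : Matrix (P ⊕ P) (P ⊕ P) ℂ) :=
    Matrix.inv_eq_right_inv hJJ'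
  -- computing J⁻¹ χᵀ J
  have hK : ((fromBlocks 0 (-1) 1 0 : Matrix (P ⊕ P) (P ⊕ P) ℂ)) * (chi2v g S R)ᵀ
        * ((fromBlocks 0 1 (-1) 0 : Matrix (P ⊕ P) (P ⊕ P) ℂ))
      = fromBlocks
          ((aT (gP g))ᵀ + (cT (gP g))ᵀ * (sT (Fin N) Sᵀ * (((EMat g S R)⁻¹)ᵀ
            * (sT (Fin N) Rᵀ * (bT (gP g))ᵀ))))
          (-((cT (gP g))ᵀ * (sT (Fin N) Sᵀ * (((EMat g S R)⁻¹)ᵀ * (bT g)ᵀ))))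
          ((cT g)ᵀ * (((EMat g S R)⁻¹)ᵀ * (sT (Fin N) Rᵀ * (bT (gP g))ᵀ)))
          ((aT g)ᵀ - (cT g)ᵀ * (((EMat g S R)⁻¹)ᵀ * (bT g)ᵀ)) := by
    rw [chi2v, fromBlocks_transpose, fromBlocks_multiply, fromBlocks_multiply, fromBlocks_inj]
    refine ⟨?_, ?_, ?_, ?_⟩ <;>
      simp [transpose_add, transpose_sub, transpose_mul, transpose_neg,
        chiaux_sT_transpose, Matrix.mul_assoc]
  have main : chi2v g Sᵀ Rᵀ
      * (((fromBlocks 0 1 (-1) 0 : Matrix (P ⊕ P) (P ⊕ P) ℂ))⁻¹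
          * (chi2v g S R)ᵀ * (fromBlocks 0 1 (-1) 0 : Matrix (P ⊕ P) (P ⊕ P) ℂ)) = 1 := by
    rw [hJinv, hK, chi2v]
    exact chiaux_key (aT g) (aT (gP g)) (bT g) (bT (gP g)) (cT g) (cT (gP g))
      (dT g) (dT (gP g)) (sT (Fin N) Sᵀ) (sT (Fin N) Rᵀ)
      ((EMat g Sᵀ Rᵀ)⁻¹) (((EMat g S R)⁻¹)ᵀ) H1 H2 H3 H4 hEi hF
  refine ⟨main, ?_⟩
  intro hS hR
  rw [hS, hR] at main
  have hcomm : (((fromBlocks 0 1 (-1) 0 : Matrix (P ⊕ P) (P ⊕ P) ℂ))⁻¹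
      * (chi2v g S R)ᵀ * (fromBlocks 0 1 (-1) 0 : Matrix (P ⊕ P) (P ⊕ P) ℂ)) * chi2v g S R = 1 :=
    mul_eq_one_comm.mp main
  rw [hJinv] at hcomm
  calc (chi2v g S R)ᵀ * (fromBlocks 0 1 (-1) 0 : Matrix (P ⊕ P) (P ⊕ P) ℂ) * chi2v g S R
      = ((fromBlocks 0 1 (-1) 0 : Matrix (P ⊕ P) (P ⊕ P) ℂ) * (fromBlocks 0 (-1) 1 0 : Matrix (P ⊕ P) (P ⊕ P) ℂ))
        * ((chi2v g S R)ᵀ * (fromBlocks 0 1 (-1) 0 : Matrix (P ⊕ P) (P ⊕ P) ℂ) * chi2v g S R) := by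
        rw [hJJ', Matrix.one_mul]
    _ = (fromBlocks 0 1 (-1) 0 : Matrix (P ⊕ P) (P ⊕ P) ℂ)
        * (((fromBlocks 0 (-1) 1 0 : Matrix (P ⊕ P) (P ⊕ P) ℂ) * (chi2v g S R)ᵀ
            * (fromBlocks 0 1 (-1) 0 : Matrix (P ⊕ P) (P ⊕ P) ℂ)) * chi2v g S R) := by
        noncomm_ring
    _ = (fromBlocks 0 1 (-1) 0 : Matrix (P ⊕ P) (P ⊕ P) ℂ) * 1 := by rw [hcomm]
    _ = (fromBlocks 0 1 (-1) 0 : Matrix (P ⊕ P) (P ⊕ P) ℂ) := Matrix.mul_one _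
end
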